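/- arXiv:1812.00004 — 7 statements merged into one kernel-verified Lean document; each statement's English description precedes it below -/
import Mathlib

section
/- In the hypercube graph Q_n, if X is a (nonempty) subgraph with minimum degree at least g, then X has at least 2^g vertices. -/
/-- The n-dimensional hypercube graph on {0,1}^n: vertices adjacent iff they
differ in exactly one coordinate. -/
def Qgraph (n : ℕ) : SimpleGraph (Fin n → Bool) :=
  SimpleGraph.fromRel (fun x y => (Finset.univ.filter (fun i => x i ≠ y i)).card = 1)

lemma qaux {n : ℕ} {x y : Fin n → Bool}
    (h : (Finset.univ.filter (fun i => x i ≠ y i)).card = 1) :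
    ∃ i, y = Function.update x i (!(x i)) := by
  obtain ⟨i, hi⟩ := Finset.card_eq_one.mp h
  refine ⟨i, funext fun j => ?_⟩
  by_cases hj : j = i
  · subst hj
    have hmem : j ∈ Finset.univ.filter (fun i => x i ≠ y i) := by
      rw [hi]; exact Finset.mem_singleton_self j
    have hne : x j ≠ y j := by simpa using hmem
    rw [Function.update_self]
    cases hxj : x j <;> cases hyj : y j <;> simp_all
  · have : x j = y j := by
      by_contra hc
      have hmem : j ∈ Finset.univ.filter (fun i => x i ≠ y i) := by simpa using hc
      rw [hi] at hmem
      exact hj (Finset.mem_singleton.mp hmem)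
    rw [Function.update_of_ne hj, this]

lemma qadj_iff {n : ℕ} {x y : Fin n → Bool} :
    (Qgraph n).Adj x y ↔ ∃ i, y = Function.update x i (!(x i)) := by
  constructor
  · rintro ⟨hne, h | h⟩
    · exact qaux h
    · refine qaux ?_
      have heq : (Finset.univ.filter (fun i => x i ≠ y i)) =
          (Finset.univ.filter (fun i => y i ≠ x i)) := by
        ext j; simp [ne_comm]
      rw [heq]
      exact h
  · rintro ⟨i, rfl⟩
    constructor
    · intro h
      have := congrFun h i
      rw [Function.update_self] at this
      exact (Bool.not_ne_self (x i)).symm this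
    · left
      show (Finset.univ.filter (fun j => x j ≠ Function.update x i (!(x i)) j)).card = 1
      rw [Finset.card_eq_one]
      refine ⟨i, Finset.ext fun j => ?_⟩
      simp only [Finset.mem_filter, Finset.mem_univ, true_and, Finset.mem_singleton]
      constructor
      · intro hj
        by_contra hji
        rw [Function.update_of_ne hji] at hj
        exact hj rfl
      · rintro rfl
        rw [Function.update_self]
        exact (Bool.not_ne_self (x j)).symm

/-- Any nonempty subgraph of Q_n with minimum degree at least g has
at least 2^g vertices. -/
theorem stmt_0 (n g : ℕ) (X : Set (Fin n → Bool)) (hX : X.Nonempty)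
    (hdeg : ∀ v ∈ X, g ≤ (X ∩ (Qgraph n).neighborSet v).ncard) :
    2 ^ g ≤ X.ncard := by
  induction g generalizing X with
  | zero =>
    simpa using Nat.one_le_of_lt ((Set.ncard_pos (Set.toFinite X)).mpr hX)
  | succ g ih =>
    obtain ⟨v, hv⟩ := hX
    have h1 : 0 < (X ∩ (Qgraph n).neighborSet v).ncard :=
      lt_of_lt_of_le (Nat.succ_pos g) (hdeg v hv)
    obtain ⟨w, hwX, hwadj⟩ := Set.nonempty_of_ncard_ne_zero h1.ne'
    obtain ⟨i, hwi⟩ := qadj_iff.mp hwadj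
    -- Split X along coordinate i
    set X0 : Bool → Set (Fin n → Bool) := fun b => {x ∈ X | x i = b} with hX0def
    have hsubdeg : ∀ b, ∀ u ∈ X0 b, g ≤ (X0 b ∩ (Qgraph n).neighborSet u).ncard := by
      intro b u hu
      have hsub : (X ∩ (Qgraph n).neighborSet u) \ {Function.update u i (!(u i))}
          ⊆ X0 b ∩ (Qgraph n).neighborSet u := by
        rintro y ⟨⟨hyX, hyadj⟩, hyne⟩
        obtain ⟨j, rfl⟩ := qadj_iff.mp hyadj
        have hji : j ≠ i := by
          rintro rfl
          exact hyne rfl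
        refine ⟨⟨hyX, ?_⟩, hyadj⟩
        rw [Function.update_of_ne (Ne.symm hji)]
        exact hu.2
      have h2 : g + 1 - 1 ≤ ((X ∩ (Qgraph n).neighborSet u) \
          {Function.update u i (!(u i))}).ncard := by
        have hfin : (X ∩ (Qgraph n).neighborSet u).Finite := Set.toFinite _
        have := Set.ncard_diff_singleton_add_one
          (s := X ∩ (Qgraph n).neighborSet u)
          (a := Function.update u i (!(u i)))
        by_cases hmem : Function.update u i (!(u i)) ∈ X ∩ (Qgraph n).neighborSet u
        · have heq := this hmem
          have hd := hdeg u hu.1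
          omega
        · rw [Set.diff_singleton_eq_self hmem]
          have hd := hdeg u hu.1
          omega
      calc g = g + 1 - 1 := rfl
        _ ≤ _ := h2
        _ ≤ (X0 b ∩ (Qgraph n).neighborSet u).ncard :=
          Set.ncard_le_ncard hsub (Set.toFinite _)
    have hne : ∀ b, (X0 b).Nonempty := by
      intro b
      by_cases hb : b = v i
      · exact ⟨v, hv, hb.symm⟩
      · refine ⟨w, hwX, ?_⟩
        rw [hwi, Function.update_self]
        cases b <;> cases hvi : v i <;> simp_all
    have hb0 : 2 ^ g ≤ (X0 false).ncard := ih (X0 false) (hne false) (hsubdeg false)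
    have hb1 : 2 ^ g ≤ (X0 true).ncard := ih (X0 true) (hne true) (hsubdeg true)
    have hunion : X0 false ∪ X0 true = X := by
      ext x
      simp only [hX0def, Set.mem_union, Set.mem_setOf_eq]
      constructor
      · rintro (⟨h, _⟩ | ⟨h, _⟩) <;> exact h
      · intro h
        cases hxi : x i
        · exact Or.inl ⟨h, rfl⟩
        · exact Or.inr ⟨h, rfl⟩
    have hdisj : Disjoint (X0 false) (X0 true) := by
      rw [Set.disjoint_left]
      rintro x ⟨_, hx0⟩ ⟨_, hx1⟩
      rw [hx0] at hx1
      exact Bool.false_ne_true hx1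
    have hcard : X.ncard = (X0 false).ncard + (X0 true).ncard := by
      rw [← hunion, Set.ncard_union_eq hdisj (Set.toFinite _) (Set.toFinite _)]
    rw [hcard, pow_succ]
    omega
end

section
/- For two distinct clusters xQ_n and yQ_n of HCN_n, there are exactly two crossing edges between them if x and y are bitwise complementary, and exactly one crossing edge otherwise. -/
/-- Vertices of the hierarchical cubic network: pairs (cluster label, position). -/
abbrev HVert (n : ℕ) := (Fin n → Bool) × (Fin n → Bool)

/-- The hierarchical cubic network HCN_n. Within a cluster (same first coordinate),
two vertices are adjacent iff their second coordinates differ in exactly one bit.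
Crossing edges: (x,y) with x ≠ y is adjacent to (y,x); (x,x) is adjacent to (x̄,x̄). -/
def HCN (n : ℕ) : SimpleGraph (HVert n) :=
  SimpleGraph.fromRel (fun u v =>
    (u.1 = v.1 ∧ (Finset.univ.filter (fun i => u.2 i ≠ v.2 i)).card = 1) ∨
    (u.1 ≠ u.2 ∧ v = (u.2, u.1)) ∨
    (u.1 = u.2 ∧ v = (fun i => !u.1 i, fun i => !u.2 i)))

/-- `u` and `v` are joined by a crossing edge of HCN_n. -/
def IsCrossing (n : ℕ) (u v : HVert n) : Prop :=
  ((u.1 ≠ u.2 ∧ v = (u.2, u.1)) ∨ (u.1 = u.2 ∧ v = (fun i => !u.1 i, fun i => !u.2 i))) ∨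
  ((v.1 ≠ v.2 ∧ u = (v.2, v.1)) ∨ (v.1 = v.2 ∧ u = (fun i => !v.1 i, fun i => !v.2 i)))

/-- Between two distinct clusters xQ_n and yQ_n of HCN_n there are exactly
two crossing edges if x and y are bitwise complementary, and exactly one
otherwise. (Crossing edges between the clusters are counted as ordered pairs
with first endpoint in xQ_n and second endpoint in yQ_n.) -/
theorem stmt_4 (n : ℕ) (hn : 2 ≤ n) (x y : Fin n → Bool) (hxy : x ≠ y) :
    {p : HVert n × HVert n | p.1.1 = x ∧ p.2.1 = y ∧ IsCrossing n p.1 p.2}.ncard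
      = if x = (fun i => !y i) then 2 else 1 := by
  have hcc : (y = fun i => !x i) → (x = fun i => !y i) := by
    rintro rfl; funext i; simp
  have hset : {p : HVert n × HVert n | p.1.1 = x ∧ p.2.1 = y ∧ IsCrossing n p.1 p.2}
      = if x = (fun i => !y i) then {((x,y),(y,x)), ((x,x),(y,y))} else {((x,y),(y,x))} := by
    ext ⟨⟨a1,a2⟩,⟨b1,b2⟩⟩
    simp only [IsCrossing, Set.mem_setOf_eq, Prod.mk.injEq, ne_eq]
    constructor
    · rintro ⟨rfl, rfl, h⟩
      rcases h with (⟨hne, h1, h2⟩ | ⟨heq, h1, h2⟩) | (⟨hne, h1, h2⟩ | ⟨heq, h1, h2⟩)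
      · subst h1; subst h2
        split_ifs with hc
        · left; simp
        · simp
      · subst heq; subst h1; subst h2
        have hc : a1 = fun i => !(fun i => !a1 i) i := by funext i; simp
        rw [if_pos hc]
        right; simp
      · subst h1; subst h2
        split_ifs with hc
        · left; simp
        · simp
      · subst heq; subst h1; subst h2
        have hc : ((fun i => !b1 i) : Fin n → Bool) = fun i => !b1 i := rfl
        rw [if_pos hc]
        right; simp
    · split_ifs with hc
      · rintro (⟨⟨rfl, rfl⟩, rfl, rfl⟩ | ⟨⟨rfl, rfl⟩, rfl, rfl⟩)
        · exact ⟨rfl, rfl, Or.inl (Or.inl ⟨hxy, rfl, rfl⟩)⟩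
        · refine ⟨rfl, rfl, Or.inl (Or.inr ⟨rfl, ?_, ?_⟩)⟩ <;>
            (subst hc; funext i; simp)
      · rintro ⟨⟨rfl, rfl⟩, rfl, rfl⟩
        exact ⟨rfl, rfl, Or.inl (Or.inl ⟨hxy, rfl, rfl⟩)⟩
  rw [hset]
  split_ifs with h
  · rw [Set.ncard_pair]
    intro he
    apply hxy
    have := congrArg (fun q => q.1.2) he
    simpa using this.symm
  · exact Set.ncard_singleton _
end

section
/- The hierarchical cubic network HCN_n (n ≥ 2) contains no triangle. -/
/-- The unique crossing neighbor of a vertex. -/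
noncomputable def crossNbr (n : ℕ) (u : HVert n) : HVert n :=
  if u.1 = u.2 then (fun i => !u.1 i, fun i => !u.2 i) else (u.2, u.1)

lemma cross_eq (n : ℕ) (u v : HVert n)
    (h : (u.1 ≠ u.2 ∧ v = (u.2, u.1)) ∨ (u.1 = u.2 ∧ v = (fun i => !u.1 i, fun i => !u.2 i))) :
    v = crossNbr n u := by
  rcases h with ⟨h1, h2⟩ | ⟨h1, h2⟩ <;> simp [crossNbr, h1, h2]

lemma crossNbr_invol (n : ℕ) (hn : 1 ≤ n) (u : HVert n) : crossNbr n (crossNbr n u) = u := by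
  obtain ⟨u1, u2⟩ := u
  by_cases h : u1 = u2
  · subst h
    have e1 : crossNbr n (u1, u1) = (fun i => !u1 i, fun i => !u1 i) := by
      rw [crossNbr, if_pos rfl]
    rw [e1, crossNbr, if_pos rfl]
    refine Prod.ext ?_ ?_ <;> funext i <;> simp
  · have e1 : crossNbr n (u1, u2) = (u2, u1) := by rw [crossNbr, if_neg h]
    rw [e1, crossNbr, if_neg (Ne.symm h)]

lemma isCrossing_eq (n : ℕ) (hn : 1 ≤ n) (u v : HVert n) (h : IsCrossing n u v) :
    v = crossNbr n u := by
  rcases h with h | h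
  · exact cross_eq n u v h
  · have := cross_eq n v u h
    rw [this, crossNbr_invol n hn]

/-- parity sum -/
noncomputable def par (n : ℕ) (y : Fin n → Bool) : ZMod 2 :=
  ∑ i, (if y i then 1 else 0)

lemma par_ne (n : ℕ) (y z : Fin n → Bool)
    (h : (Finset.univ.filter (fun i => y i ≠ z i)).card = 1) : par n y ≠ par n z := by
  have key : par n y - par n z = 1 := by
    have : par n y - par n z = ∑ i, ((if y i then (1:ZMod 2) else 0) - (if z i then 1 else 0)) := by
      rw [par, par, Finset.sum_sub_distrib]
    rw [this]
    have : ∀ i : Fin n, ((if y i then (1:ZMod 2) else 0) - (if z i then 1 else 0)) =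
        (if y i ≠ z i then 1 else 0) := by
      intro i
      cases hy : y i <;> cases hz : z i <;> simp <;> decide
    rw [Finset.sum_congr rfl (fun i _ => this i), Finset.sum_boole, h]
    norm_num
  intro he
  rw [he, sub_self] at key
  exact one_ne_zero key.symm

/-- HCN_n (n ≥ 2) contains no triangle. -/
theorem stmt_6 (n : ℕ) (hn : 2 ≤ n) : (HCN n).CliqueFree 3 := by
  have hn1 : 1 ≤ n := le_trans (by norm_num) hn
  intro t ht
  rw [SimpleGraph.isNClique_iff] at ht
  obtain ⟨hcl, hcard⟩ := ht
  obtain ⟨a, b, c, hab, hac, hbc, ht⟩ := Finset.card_eq_three.mp hcard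
  subst ht
  have Hab := hcl (by simp) (by simp) hab
  have Hbc := hcl (by simp) (by simp) hbc
  have Hac := hcl (by simp) (by simp) hac
  -- decompose adjacency
  have decomp : ∀ u v : HVert n, (HCN n).Adj u v →
      (u.1 = v.1 ∧ (Finset.univ.filter (fun i => u.2 i ≠ v.2 i)).card = 1) ∨ IsCrossing n u v := by
    intro u v h
    rw [HCN, SimpleGraph.fromRel_adj] at h
    obtain ⟨_, h⟩ := h
    rcases h with (h | h | h) | (h | h | h)
    · exact Or.inl h
    · exact Or.inr (Or.inl (Or.inl h))
    · exact Or.inr (Or.inl (Or.inr h))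
    · refine Or.inl ⟨h.1.symm, ?_⟩
      rw [← h.2]; congr 1; ext i; simp [ne_comm]
    · exact Or.inr (Or.inr (Or.inl h))
    · exact Or.inr (Or.inr (Or.inr h))
  -- crossing neighbor's first coordinate differs
  have crossFst : ∀ u : HVert n, (crossNbr n u).1 ≠ u.1 := by
    intro u
    by_cases h : u.1 = u.2
    · rw [crossNbr, if_pos h]
      intro he
      have := congrFun he ⟨0, hn1⟩
      simp at this
    · rw [crossNbr, if_neg h]
      exact Ne.symm h
  rcases decomp a b Hab with ⟨e1, d1⟩ | x1
  · rcases decomp b c Hbc with ⟨e2, d2⟩ | x2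
    · rcases decomp a c Hac with ⟨e3, d3⟩ | x3
      · -- all hypercube: parity contradiction
        have p1 := par_ne n a.2 b.2 d1
        have p2 := par_ne n b.2 c.2 d2
        have p3 := par_ne n a.2 c.2 d3
        have : par n a.2 = par n c.2 := by
          revert p1 p2 p3
          generalize par n a.2 = x; generalize par n b.2 = y; generalize par n c.2 = z
          revert x y z; decide
        exact p3 this
      · -- ac crossing, ab & bc hypercube: a.1 = b.1 = c.1 but c = crossNbr a
        have hc := isCrossing_eq n hn1 a c x3
        have : c.1 = a.1 := by rw [e1, e2]
        rw [hc] at this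
        exact crossFst a this
    · -- bc crossing, ab hypercube
      rcases decomp a c Hac with ⟨e3, d3⟩ | x3
      · have hc := isCrossing_eq n hn1 b c x2
        have : c.1 = b.1 := by rw [← e3, e1]
        rw [hc] at this
        exact crossFst b this
      · -- bc and ac crossing: c has two crossing nbrs... crossing from c
        have h1 := isCrossing_eq n hn1 c b (Or.symm x2)
        have h2 := isCrossing_eq n hn1 c a (Or.symm x3)
        exact hab (h2.trans h1.symm)
  · rcases decomp b c Hbc with ⟨e2, d2⟩ | x2
    · rcases decomp a c Hac with ⟨e3, d3⟩ | x3
      · have hb := isCrossing_eq n hn1 a b x1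
        have : b.1 = a.1 := by rw [e2, ← e3]
        rw [hb] at this
        exact crossFst a this
      · -- ab, ac crossing at a
        have h1 := isCrossing_eq n hn1 a b x1
        have h2 := isCrossing_eq n hn1 a c x3
        exact hbc (h1.trans h2.symm)
    · -- ab, bc crossing at b
      have h1 := isCrossing_eq n hn1 b a (Or.symm x1)
      have h2 := isCrossing_eq n hn1 b c x2
      exact hac (h1.trans h2.symm)
end

section
/- In the hierarchical cubic network HCN_n with n ≥ 2, if X is a (nonempty) subgraph with minimum degree at least g, where 1 ≤ g ≤ n−1, then X has at least 2^g vertices. -/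
open Finset

def Qadj (n : ℕ) (u v : Fin n → Bool) : Prop :=
  (Finset.univ.filter (fun i => u i ≠ v i)).card = 1

instance (n : ℕ) (u v : Fin n → Bool) : Decidable (Qadj n u v) := by
  unfold Qadj; infer_instance

lemma qadj_symm {n : ℕ} {u v : Fin n → Bool} (h : Qadj n u v) : Qadj n v u := by
  unfold Qadj at *
  rw [show (Finset.univ.filter (fun i => v i ≠ u i)) =
      (Finset.univ.filter (fun i => u i ≠ v i)) from Finset.filter_congr (fun i _ => by
        simp [ne_comm])]
  exact h

lemma qadj_flip {n : ℕ} {u z : Fin n → Bool} {i : Fin n} (h : Qadj n u z) (hi : z i ≠ u i) :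
    z = Function.update u i (!u i) := by
  unfold Qadj at h
  obtain ⟨a, ha⟩ := Finset.card_eq_one.mp h
  have hia : i ∈ Finset.univ.filter (fun j => u j ≠ z j) := by
    simp [Ne.symm hi]
  rw [ha, Finset.mem_singleton] at hia
  subst hia
  funext j
  by_cases hj : j = i
  · subst hj
    simp only [Function.update_self]
    cases hz : z j <;> cases hu : u j <;> simp_all
  · have : j ∉ Finset.univ.filter (fun k => u k ≠ z k) := by
      rw [ha]; simpa using hj
    simp only [Finset.mem_filter, Finset.mem_univ, true_and, not_not] at this
    rw [Function.update_of_ne hj]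
    exact this.symm

lemma half_deg {n : ℕ} (g : ℕ) (S : Finset (Fin n → Bool)) (i : Fin n) (c : Bool)
    (u : Fin n → Bool) (hu : u i = c)
    (hdeg : g + 1 ≤ (S.filter (fun w => Qadj n u w)).card) :
    g ≤ ((S.filter (fun z => z i = c)).filter (fun w => Qadj n u w)).card := by
  have hsub : S.filter (fun w => Qadj n u w) ⊆
      ((S.filter (fun z => z i = c)).filter (fun w => Qadj n u w)) ∪
        {Function.update u i (!u i)} := by
    intro z hz
    rw [Finset.mem_filter] at hz
    by_cases hzc : z i = c
    · exact Finset.mem_union_left _ (by rw [Finset.mem_filter, Finset.mem_filter]; exact ⟨⟨hz.1, hzc⟩, hz.2⟩)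
    · have : z i ≠ u i := by rw [hu]; exact hzc
      exact Finset.mem_union_right _ (by simp [qadj_flip hz.2 this])
  have h2 := (Finset.card_le_card hsub).trans (Finset.card_union_le _ _)
  rw [Finset.card_singleton] at h2
  exact Nat.le_of_succ_le_succ (le_trans hdeg h2)

lemma cube_lemma {n : ℕ} : ∀ (g : ℕ) (S : Finset (Fin n → Bool)), S.Nonempty →
    (∀ v ∈ S, g ≤ (S.filter (fun w => Qadj n v w)).card) → 2 ^ g ≤ S.card := by
  intro g
  induction g with
  | zero => intro S hS _; simpa [Finset.card_pos] using hS.card_pos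
  | succ g ih =>
    intro S hS hdeg
    obtain ⟨v, hv⟩ := hS
    have h1 : 0 < (S.filter (fun w => Qadj n v w)).card := lt_of_lt_of_le (by omega) (hdeg v hv)
    obtain ⟨w, hw⟩ := Finset.card_pos.mp h1
    rw [Finset.mem_filter] at hw
    have hqvw : Qadj n v w := hw.2
    have : 0 < (Finset.univ.filter (fun i => v i ≠ w i)).card := by rw [hqvw]; omega
    obtain ⟨i, hi⟩ := Finset.card_pos.mp this
    simp only [Finset.mem_filter, Finset.mem_univ, true_and] at hi
    set S0 := S.filter (fun z => z i = v i) with hS0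
    set S1 := S.filter (fun z => z i = !(v i)) with hS1
    have hd0 : ∀ u ∈ S0, g ≤ (S0.filter (fun w => Qadj n u w)).card := by
      intro u hu
      rw [hS0, Finset.mem_filter] at hu
      exact half_deg g S i (v i) u hu.2 (hdeg u hu.1)
    have hd1 : ∀ u ∈ S1, g ≤ (S1.filter (fun w => Qadj n u w)).card := by
      intro u hu
      rw [hS1, Finset.mem_filter] at hu
      exact half_deg g S i (!(v i)) u hu.2 (hdeg u hu.1)
    have hne0 : S0.Nonempty := ⟨v, by rw [hS0, Finset.mem_filter]; exact ⟨hv, rfl⟩⟩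
    have hne1 : S1.Nonempty := ⟨w, by
      rw [hS1, Finset.mem_filter]
      exact ⟨hw.1, Bool.eq_not_iff.mpr (Ne.symm hi)⟩⟩
    have hc0 := ih S0 hne0 hd0
    have hc1 := ih S1 hne1 hd1
    have hdisj : Disjoint S0 S1 := by
      rw [Finset.disjoint_left]
      intro a ha0 ha1
      rw [hS0, Finset.mem_filter] at ha0
      rw [hS1, Finset.mem_filter] at ha1
      rw [ha0.2] at ha1
      exact Bool.eq_not_iff.mp ha1.2 rfl
    have hsub : S0 ∪ S1 ⊆ S := Finset.union_subset (Finset.filter_subset _ _) (Finset.filter_subset _ _)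
    have := Finset.card_le_card hsub
    rw [Finset.card_union_of_disjoint hdisj] at this
    calc 2 ^ (g + 1) = 2 ^ g + 2 ^ g := by ring
    _ ≤ S0.card + S1.card := Nat.add_le_add hc0 hc1
    _ ≤ S.card := this


def crossV (n : ℕ) (u : HVert n) : HVert n :=
  if u.1 = u.2 then (fun i => !u.1 i, fun i => !u.2 i) else (u.2, u.1)

lemma cross_fst_ne {n : ℕ} (hn : 0 < n) (u : HVert n) : (crossV n u).1 ≠ u.1 := by
  unfold crossV
  split
  · intro h
    have := congrFun h ⟨0, hn⟩
    simp at this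
  · rename_i h
    exact fun h' => h (h' ▸ rfl)

lemma qadj_ne {n : ℕ} {u v : Fin n → Bool} (h : Qadj n u v) : u ≠ v := by
  intro he
  subst he
  unfold Qadj at h
  simp at h

lemma crossrel_iff {n : ℕ} (u v : HVert n) :
    ((u.1 ≠ u.2 ∧ v = (u.2, u.1)) ∨ (u.1 = u.2 ∧ v = (fun i => !u.1 i, fun i => !u.2 i))) ↔
      v = crossV n u := by
  unfold crossV
  by_cases h : u.1 = u.2 <;> simp [h]

lemma crossV_crossV {n : ℕ} (u : HVert n) : crossV n (crossV n u) = u := by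
  by_cases h : u.1 = u.2
  · have h1 : crossV n u = (fun i => !u.1 i, fun i => !u.2 i) := by unfold crossV; rw [if_pos h]
    have h2 : (fun i => !u.1 i : Fin n → Bool) = fun i => !u.2 i := by rw [h]
    rw [h1]
    unfold crossV
    rw [if_pos h2]
    refine Prod.ext ?_ ?_ <;> (funext i; simp)
  · have h1 : crossV n u = (u.2, u.1) := by unfold crossV; rw [if_neg h]
    rw [h1]
    unfold crossV
    rw [if_neg (fun he => h he.symm)]

lemma adj_iff {n : ℕ} (hn : 0 < n) (u v : HVert n) :
    (HCN n).Adj u v ↔ (u.1 = v.1 ∧ Qadj n u.2 v.2) ∨ v = crossV n u := by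
  show (u ≠ v ∧ _) ↔ _
  constructor
  · rintro ⟨hne, h | h⟩
    · rcases h with h | h
      · exact Or.inl ⟨h.1, h.2⟩
      · exact Or.inr ((crossrel_iff u v).mp h)
    · rcases h with h | h
      · exact Or.inl ⟨h.1.symm, qadj_symm h.2⟩
      · have : u = crossV n v := (crossrel_iff v u).mp h
        refine Or.inr ?_
        rw [this, crossV_crossV]
  · rintro (⟨h1, h2⟩ | h)
    · refine ⟨?_, Or.inl (Or.inl ⟨h1, h2⟩)⟩
      intro he; exact qadj_ne h2 (by rw [he])
    · subst h
      refine ⟨?_, Or.inl (Or.inr ((crossrel_iff u _).mpr rfl))⟩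
      intro he
      exact cross_fst_ne hn u (by rw [← he])

lemma cluster_lemma {n : ℕ} (d : ℕ) (T : Finset (HVert n)) (x : Fin n → Bool)
    (hne : ∃ v ∈ T, v.1 = x)
    (hd : ∀ v ∈ T, v.1 = x → d ≤ (T.filter (fun w => w.1 = x ∧ Qadj n v.2 w.2)).card) :
    2 ^ d ≤ (T.filter (fun v => v.1 = x)).card := by
  classical
  set C := T.filter (fun v => v.1 = x) with hC
  have hinj : Set.InjOn (Prod.snd : HVert n → (Fin n → Bool)) ↑C := by
    intro a ha b hb hab
    rw [hC, Finset.coe_filter] at ha hb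
    exact Prod.ext (ha.2.trans hb.2.symm) hab
  set S := C.image Prod.snd with hS
  have hScard : S.card = C.card := Finset.card_image_of_injOn hinj
  have hSne : S.Nonempty := by
    obtain ⟨v, hv, hvx⟩ := hne
    exact ⟨v.2, Finset.mem_image_of_mem _ (by rw [hC, Finset.mem_filter]; exact ⟨hv, hvx⟩)⟩
  have hSdeg : ∀ y ∈ S, d ≤ (S.filter (fun w => Qadj n y w)).card := by
    intro y hy
    rw [hS, Finset.mem_image] at hy
    obtain ⟨v, hvC, hvy⟩ := hy
    have hvT : v ∈ T := Finset.mem_of_mem_filter _ hvC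
    have hvx : v.1 = x := (Finset.mem_filter.mp hvC).2
    have key : S.filter (fun w => Qadj n y w) = (C.filter (fun w => Qadj n y w.2)).image Prod.snd := by
      rw [hS, Finset.filter_image]
    rw [key]
    have : (C.filter (fun w => Qadj n y w.2)).card = (T.filter (fun w => w.1 = x ∧ Qadj n v.2 w.2)).card := by
      congr 1
      rw [hC, Finset.filter_filter]
      apply Finset.filter_congr
      intro w _
      rw [← hvy]
    have hsub2 : ((C.filter (fun w => Qadj n y w.2)) : Set (HVert n)) ⊆ ↑C := by
      intro a ha
      simp only [Finset.coe_filter, Set.mem_setOf_eq] at ha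
      exact ha.1
    rw [Finset.card_image_of_injOn (hinj.mono hsub2), this]
    exact hd v hvT hvx
  calc 2 ^ d ≤ S.card := cube_lemma d S hSne hSdeg
  _ = C.card := hScard


/-- Any nonempty subgraph of HCN_n (n ≥ 2) with minimum degree at least g,
1 ≤ g ≤ n-1, has at least 2^g vertices. -/
theorem stmt_7 (n g : ℕ) (hn : 2 ≤ n) (hg1 : 1 ≤ g) (hg2 : g ≤ n - 1)
    (X : Set (HVert n)) (hX : X.Nonempty)
    (hdeg : ∀ v ∈ X, g ≤ (X ∩ (HCN n).neighborSet v).ncard) :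
    2 ^ g ≤ X.ncard := by
  classical
  have hn1 : 0 < n := by omega
  set T := X.toFinset with hT
  have hcard : X.ncard = T.card := Set.ncard_eq_toFinset_card' X
  rw [hcard]
  have hdegT : ∀ v ∈ T, g ≤ (T.filter (fun w => (HCN n).Adj v w)).card := by
    intro v hv
    have hvX : v ∈ X := Set.mem_toFinset.mp hv
    have h1 := hdeg v hvX
    have h2 : (X ∩ (HCN n).neighborSet v).ncard = (T.filter (fun w => (HCN n).Adj v w)).card := by
      rw [Set.ncard_eq_toFinset_card']
      congr 1
      ext w
      simp [hT, SimpleGraph.mem_neighborSet]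
    omega
  -- each vertex of T has cluster degree ≥ g - 1
  have hclus : ∀ v ∈ T, g - 1 ≤ (T.filter (fun w => w.1 = v.1 ∧ Qadj n v.2 w.2)).card := by
    intro v hv
    have hsub : T.filter (fun w => (HCN n).Adj v w) ⊆
        (T.filter (fun w => w.1 = v.1 ∧ Qadj n v.2 w.2)) ∪ {crossV n v} := by
      intro z hz
      rw [Finset.mem_filter] at hz
      rcases (adj_iff hn1 v z).mp hz.2 with h | h
      · exact Finset.mem_union_left _ (Finset.mem_filter.mpr ⟨hz.1, h.1.symm, h.2⟩)
      · exact Finset.mem_union_right _ (by simp [h])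
    have := (Finset.card_le_card hsub).trans (Finset.card_union_le _ _)
    rw [Finset.card_singleton] at this
    have := le_trans (hdegT v hv) this
    omega
  obtain ⟨v0, hv0X⟩ := hX
  have hv0 : v0 ∈ T := Set.mem_toFinset.mpr hv0X
  by_cases hone : ∀ v ∈ T, v.1 = v0.1
  · -- single cluster: crossing partner not in T, full degree g inside cluster
    have hd : ∀ v ∈ T, v.1 = v0.1 → g ≤ (T.filter (fun w => w.1 = v0.1 ∧ Qadj n v.2 w.2)).card := by
      intro v hv hvx
      have hsub : T.filter (fun w => (HCN n).Adj v w) ⊆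
          T.filter (fun w => w.1 = v0.1 ∧ Qadj n v.2 w.2) := by
        intro z hz
        rw [Finset.mem_filter] at hz
        rcases (adj_iff hn1 v z).mp hz.2 with h | h
        · exact Finset.mem_filter.mpr ⟨hz.1, (h.1.symm).trans hvx, h.2⟩
        · exfalso
          have hzT := hz.1
          have : z.1 = v0.1 := hone z hzT
          rw [h] at this
          exact cross_fst_ne hn1 v (this.trans hvx.symm)
      exact le_trans (hdegT v hv) (Finset.card_le_card hsub)
    have := cluster_lemma g T v0.1 ⟨v0, hv0, rfl⟩ hd
    refine le_trans this (Finset.card_le_card (Finset.filter_subset _ _))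
  · push_neg at hone
    obtain ⟨v1, hv1, hv1ne⟩ := hone
    -- two distinct clusters
    have hdx : ∀ (x : Fin n → Bool), ∀ v ∈ T, v.1 = x →
        g - 1 ≤ (T.filter (fun w => w.1 = x ∧ Qadj n v.2 w.2)).card := by
      intro x v hv hvx
      subst hvx
      exact hclus v hv
    have hb0 := cluster_lemma (g-1) T v0.1 ⟨v0, hv0, rfl⟩ (hdx v0.1)
    have hb1 := cluster_lemma (g-1) T v1.1 ⟨v1, hv1, rfl⟩ (hdx v1.1)
    have hdisj : Disjoint (T.filter (fun v => v.1 = v0.1)) (T.filter (fun v => v.1 = v1.1)) := by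
      rw [Finset.disjoint_left]
      intro a ha hb
      exact hv1ne ((Finset.mem_filter.mp hb).2.symm.trans (Finset.mem_filter.mp ha).2)
    have hsub : (T.filter (fun v => v.1 = v0.1)) ∪ (T.filter (fun v => v.1 = v1.1)) ⊆ T :=
      Finset.union_subset (Finset.filter_subset _ _) (Finset.filter_subset _ _)
    have hc := Finset.card_le_card hsub
    rw [Finset.card_union_of_disjoint hdisj] at hc
    have : 2 ^ g ≤ 2 ^ (g-1) + 2 ^ (g-1) := by
      have : 2 ^ g = 2 ^ (g - 1) * 2 := by
        rw [← pow_succ]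
        congr 1
        omega
      omega
    omega
end

section
/- Let X be a subcube of a cluster of HCN_n inducing a copy of Q_g, where 1 ≤ g ≤ n−1. Then the neighborhood N(X) of X in HCN_n (vertices outside X adjacent to some vertex of X) has size exactly 2^g(n+1−g). -/
/-- `X` is a subcube of a cluster of HCN_n inducing a copy of Q_g: all vertices
of `X` share the first coordinate `x`, and their second coordinates form a
g-dimensional subcube (they agree on a set `S` of `n - g` fixed coordinates). -/
def IsClusterSubcube (n g : ℕ) (X : Set (HVert n)) : Prop :=
  ∃ (x : Fin n → Bool) (S : Finset (Fin n)) (f : Fin n → Bool),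
    S.card = n - g ∧ X = {v | v.1 = x ∧ ∀ i ∈ S, v.2 i = f i}

/-- The (open) neighborhood of a vertex set in HCN_n. -/
def setNbhd (n : ℕ) (X : Set (HVert n)) : Set (HVert n) :=
  {w | w ∉ X ∧ ∃ v ∈ X, (HCN n).Adj v w}

/-- The parametrization of the neighborhood of a cluster subcube. -/
def psiMap (n : ℕ) (x : Fin n → Bool) (S : Finset (Fin n)) (f : Fin n → Bool)
    (p : ({i : Fin n // i ∈ S} ⊕ Unit) × {y : Fin n → Bool // ∀ i ∈ S, y i = f i}) :
    HVert n :=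
  match p.1 with
  | Sum.inl i => (x, Function.update p.2.1 i.1 (!f i.1))
  | Sum.inr _ => if p.2.1 = x then (fun j => !x j, fun j => !x j) else (p.2.1, x)

lemma hcn_adj_of {n : ℕ} (u v : HVert n) (hne : u ≠ v)
    (h : (u.1 = v.1 ∧ (Finset.univ.filter (fun i => u.2 i ≠ v.2 i)).card = 1) ∨
      (u.1 ≠ u.2 ∧ v = (u.2, u.1)) ∨
      (u.1 = u.2 ∧ v = (fun i => !u.1 i, fun i => !u.2 i))) : (HCN n).Adj u v :=
  (SimpleGraph.fromRel_adj _ u v).mpr ⟨hne, Or.inl h⟩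

lemma not_neg_eq_self {n : ℕ} (hn : 0 < n) (x : Fin n → Bool) :
    (fun j => !x j) ≠ x := by
  intro h
  have := congrFun h ⟨0, hn⟩
  simp at this

/-- If X is a subcube of a cluster of HCN_n inducing Q_g, 1 ≤ g ≤ n-1, then
|N(X)| = 2^g (n+1-g). -/
theorem stmt_9 (n g : ℕ) (hg1 : 1 ≤ g) (hg2 : g ≤ n - 1)
    (X : Set (HVert n)) (hX : IsClusterSubcube n g X) :
    (setNbhd n X).ncard = 2 ^ g * (n + 1 - g) := by
  obtain ⟨x, S, f, hS, hXeq⟩ := hX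
  have hgn : g + 1 ≤ n := by omega
  have hn0 : 0 < n := by omega
  have hxne : (fun j => !x j) ≠ x := not_neg_eq_self hn0 x
  set Ψ := psiMap n x S f with hΨ
  -- injectivity
  have hinj : Function.Injective Ψ := by
    rintro ⟨s1, y1, hy1⟩ ⟨s2, y2, hy2⟩ h
    rcases s1 with i | _ <;> rcases s2 with i' | _ <;>
      simp only [hΨ, psiMap] at h
    · -- inl inl
      have h1 : x = x := congrArg Prod.fst h
      have h2 : Function.update y1 i.1 (!f i.1) = Function.update y2 i'.1 (!f i'.1) :=
        congrArg Prod.snd h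
      have hii : i.1 = i'.1 := by
        by_contra hne
        have := congrFun h2 i.1
        rw [Function.update_self, Function.update_of_ne hne] at this
        rw [hy2 i.1 i.2] at this
        cases f i.1 <;> simp at this
      have hy : y1 = y2 := by
        funext j
        rcases eq_or_ne j i.1 with rfl | hj
        · rw [hy1 i.1 i.2, hy2 i.1 (hii ▸ i'.2)]
        · have := congrFun h2 j
          rwa [Function.update_of_ne hj, Function.update_of_ne (hii ▸ hj)] at this
      refine Prod.ext (congrArg Sum.inl (Subtype.ext hii)) (Subtype.ext hy)
    · -- inl inr
      exfalso
      split_ifs at h with hc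
      · exact hxne (congrArg Prod.fst h).symm
      · exact hc (congrArg Prod.fst h).symm
    · -- inr inl
      exfalso
      split_ifs at h with hc
      · exact hxne (congrArg Prod.fst h)
      · exact hc (congrArg Prod.fst h)
    · -- inr inr
      split_ifs at h with hc1 hc2 hc2
      · exact Prod.ext (congrArg Sum.inr (Subsingleton.elim _ _))
          (Subtype.ext (hc1.trans hc2.symm))
      · exact ((hxne : ¬ _ = x) (congrArg Prod.snd h)).elim
      · exact ((hxne : ¬ _ = x) (congrArg Prod.snd h).symm).elim
      · exact Prod.ext (congrArg Sum.inr (Subsingleton.elim _ _))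
          (Subtype.ext (congrArg Prod.fst h))
  -- range equality
  have hrange : setNbhd n X = Set.range Ψ := by
    ext w
    constructor
    · rintro ⟨hwX, v, hvX, hadj⟩
      rw [hXeq] at hvX hwX
      obtain ⟨hv1, hv2⟩ := hvX
      rw [HCN, SimpleGraph.fromRel_adj] at hadj
      obtain ⟨hne, hrel⟩ := hadj
      -- helper for the hamming-1 cases
      have ham : ∀ (h1 : v.1 = w.1)
          (h2 : (Finset.univ.filter (fun i => v.2 i ≠ w.2 i)).card = 1),
          w ∈ Set.range Ψ := by
        intro h1 h2
        obtain ⟨i, hi⟩ := Finset.card_eq_one.mp h2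
        have hmem : ∀ j, v.2 j ≠ w.2 j ↔ j = i := by
          intro j
          constructor
          · intro hj
            have : j ∈ Finset.univ.filter (fun i => v.2 i ≠ w.2 i) := by
              simp [hj]
            rw [hi] at this; simpa using this
          · rintro rfl
            have h3 : j ∈ Finset.univ.filter (fun k => v.2 k ≠ w.2 k) := by
              rw [hi]; simp
            simpa using h3
        have hiS : i ∈ S := by
          by_contra hiS
          apply hwX
          refine ⟨by rw [← h1, hv1], fun j hj => ?_⟩
          have hji : j ≠ i := fun hji => hiS (hji ▸ hj)
          have hvw : v.2 j = w.2 j := by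
            by_contra hcon
            exact hji ((hmem j).mp hcon)
          rw [← hvw]
          exact hv2 j hj
        refine ⟨(Sum.inl ⟨i, hiS⟩, ⟨v.2, hv2⟩), ?_⟩
        simp only [hΨ, psiMap]
        have hw2 : Function.update v.2 i (!f i) = w.2 := by
          funext j
          rcases eq_or_ne j i with heq | hj
          · subst heq
            rw [Function.update_self]
            have hvw : v.2 j ≠ w.2 j := (hmem j).mpr rfl
            rw [hv2 j hiS] at hvw
            cases hfw : w.2 j <;> cases hff : f j <;> simp_all
          · rw [Function.update_of_ne hj]
            by_contra hc
            exact hj ((hmem j).mp hc)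
        exact Prod.ext (by rw [← hv1, h1]) hw2
      rcases hrel with (⟨h1, h2⟩ | ⟨h1, h2⟩ | ⟨h1, h2⟩) | (⟨h1, h2⟩ | ⟨h1, h2⟩ | ⟨h1, h2⟩)
      · exact ham h1 h2
      · -- v crossing, v.1 ≠ v.2
        refine ⟨(Sum.inr (), ⟨v.2, hv2⟩), ?_⟩
        have hv2x : v.2 ≠ x := fun hc => h1 (by rw [hv1, hc])
        simp only [hΨ, psiMap, if_neg hv2x]
        rw [h2, hv1]
      · -- v crossing, v.1 = v.2
        refine ⟨(Sum.inr (), ⟨v.2, hv2⟩), ?_⟩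
        have hv2x : v.2 = x := by rw [← h1, hv1]
        simp only [hΨ, psiMap, if_pos hv2x]
        rw [h2, hv1]
        simp [hv2x]
      · -- hamming from w side
        refine ham h1.symm ?_
        have hfe : (Finset.univ.filter (fun i => v.2 i ≠ w.2 i))
            = (Finset.univ.filter (fun i => w.2 i ≠ v.2 i)) := by
          ext i
          simp only [Finset.mem_filter, Finset.mem_univ, true_and]
          exact ⟨Ne.symm, Ne.symm⟩
        rw [hfe]
        exact h2
      · -- w crossing to v : v = (w.2, w.1)
        refine ⟨(Sum.inr (), ⟨v.2, hv2⟩), ?_⟩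
        have hw2 : w.2 = v.1 := by rw [h2]
        have hw1 : w.1 = v.2 := by rw [h2]
        have hv2x : v.2 ≠ x := by
          rw [← hw1]; intro hc; exact h1 (by rw [hc, hw2, hv1])
        simp only [hΨ, psiMap, if_neg hv2x]
        exact (Prod.ext hw1 (hw2.trans hv1)).symm
      · -- w crossing to v with w.1 = w.2
        refine ⟨(Sum.inr (), ⟨v.2, hv2⟩), ?_⟩
        have hv1w : v.1 = fun i => !w.1 i := by rw [h2]
        have hv2w : v.2 = fun i => !w.2 i := by rw [h2]
        have hv12 : v.2 = v.1 := by rw [hv1w, hv2w, h1]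
        have hv2x : v.2 = x := by rw [hv12, hv1]
        simp only [hΨ, psiMap, if_pos hv2x]
        have hw1 : w.1 = fun i => !x i := by
          funext i
          have := congrFun hv1w i
          rw [hv1] at this
          cases hwi : w.1 i <;> simp [hwi] at this <;> simp [this]
        refine (Prod.ext hw1 ?_).symm
        rw [← h1, hw1]
    · rintro ⟨⟨s, y, hy⟩, rfl⟩
      rcases s with i | _
      · -- cube neighbor
        simp only [hΨ, psiMap]
        constructor
        · rw [hXeq]
          rintro ⟨-, h⟩
          have h5 := h i.1 i.2
          simp only [Function.update_self] at h5
          cases f i.1 <;> simp_all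
        · refine ⟨(x, y), by rw [hXeq]; exact ⟨rfl, hy⟩, ?_⟩
          refine hcn_adj_of _ _ ?_ (Or.inl ⟨rfl, ?_⟩)
          · intro hc
            have h6 := congrFun (congrArg Prod.snd hc) i.1
            simp only [Function.update_self] at h6
            rw [hy i.1 i.2] at h6
            cases f i.1 <;> simp at h6
          · have : (Finset.univ.filter fun j => y j ≠ Function.update y i.1 (!f i.1) j)
                = {i.1} := by
              ext j
              simp only [Finset.mem_filter, Finset.mem_univ, true_and,
                Finset.mem_singleton, Function.update_apply]
              rcases eq_or_ne j i.1 with heq | hj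
              · simp only [heq, if_pos rfl, hy i.1 i.2, iff_true]
                cases f i.1 <;> simp
              · simp [hj]
            rw [this, Finset.card_singleton]
      · -- crossing neighbor
        simp only [hΨ, psiMap]
        split_ifs with hc
        · constructor
          · rw [hXeq]
            rintro ⟨h, -⟩
            exact hxne h
          · refine ⟨(x, x), by rw [hXeq]; exact ⟨rfl, by rw [← hc]; exact hy⟩, ?_⟩
            exact hcn_adj_of _ _ (fun h => hxne (congrArg Prod.fst h).symm)
              (Or.inr (Or.inr ⟨rfl, rfl⟩))
        · constructor
          · rw [hXeq]
            rintro ⟨h, -⟩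
            exact hc h
          · refine ⟨(x, y), by rw [hXeq]; exact ⟨rfl, hy⟩, ?_⟩
            exact hcn_adj_of _ _ (fun h => hc (congrArg Prod.fst h).symm)
              (Or.inr (Or.inl ⟨fun h => hc h.symm, rfl⟩))
  -- counting
  rw [hrange, ← Nat.card_coe_set_eq, Nat.card_range_of_injective hinj,
    Nat.card_eq_fintype_card]
  have hcube : Fintype.card {y : Fin n → Bool // ∀ i ∈ S, y i = f i} = 2 ^ g := by
    have e : {y : Fin n → Bool // ∀ i ∈ S, y i = f i} ≃ ({j : Fin n // j ∈ Sᶜ} → Bool) :=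
      { toFun := fun y j => y.1 j.1
        invFun := fun t => ⟨fun i => if h : i ∈ S then f i else
            t ⟨i, Finset.mem_compl.mpr h⟩, fun i hi => dif_pos hi⟩
        left_inv := by
          rintro ⟨y, hy⟩
          ext i
          by_cases h : i ∈ S
          · simp [dif_pos h, hy i h]
          · simp [dif_neg h]
        right_inv := by
          intro t
          funext j
          simp [dif_neg (Finset.mem_compl.mp j.2)] }
    rw [Fintype.card_congr e, Fintype.card_fun]
    have : (Sᶜ : Finset (Fin n)).card = g := by
      rw [Finset.card_compl, hS, Fintype.card_fin]
      omega
    rw [Fintype.card_coe, this, Fintype.card_bool]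
  rw [Fintype.card_prod]
  rw [Fintype.card_sum]
  rw [Fintype.card_unit]
  rw [Fintype.card_coe]
  rw [hS, hcube]
  have h7 : n + 1 - g = n - g + 1 := Nat.sub_add_comm (Nat.le_of_succ_le hgn)
  rw [h7, mul_comm]
end

section
/- Let X be a subcube of a cluster of HCN_n inducing Q_g, with 1 ≤ g ≤ n−1. Then every vertex of HCN_n outside the closed neighborhood N[X] = X ∪ N(X) has at least g neighbors outside N[X]. -/
namespace HCNaux
variable {n : ℕ}

def flp (c : Fin n → Bool) (i : Fin n) : Fin n → Bool := Function.update c i (!c i)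

lemma flp_self (c : Fin n → Bool) (i : Fin n) : flp c i i = !c i := by simp [flp]

lemma flp_ne_apply (c : Fin n → Bool) {i j : Fin n} (h : j ≠ i) : flp c i j = c j := by
  simp [flp, h]

lemma flp_ne (c : Fin n → Bool) (i : Fin n) : flp c i ≠ c := fun h => by
  have := congrFun h i; rw [flp_self] at this; simp at this

lemma flp_inj {c : Fin n → Bool} {i j : Fin n} (h : flp c i = flp c j) : i = j := by
  by_contra hij
  have h1 := congrFun h i
  rw [flp_self, flp_ne_apply c hij] at h1
  simp at h1

lemma flp_flp (c : Fin n → Bool) (i : Fin n) : flp (flp c i) i = c := by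
  funext j
  by_cases hj : j = i
  · subst hj; rw [flp_self, flp_self, Bool.not_not]
  · rw [flp_ne_apply _ hj, flp_ne_apply _ hj]

lemma hcn_adj_iff (u v : HVert n) : (HCN n).Adj u v ↔ u ≠ v ∧
    (((u.1 = v.1 ∧ (Finset.univ.filter (fun i => u.2 i ≠ v.2 i)).card = 1) ∨
      (u.1 ≠ u.2 ∧ v = (u.2, u.1)) ∨
      (u.1 = u.2 ∧ v = (fun i => !u.1 i, fun i => !u.2 i))) ∨
     ((v.1 = u.1 ∧ (Finset.univ.filter (fun i => v.2 i ≠ u.2 i)).card = 1) ∨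
      (v.1 ≠ v.2 ∧ u = (v.2, v.1)) ∨
      (v.1 = v.2 ∧ u = (fun i => !v.1 i, fun i => !v.2 i)))) := by
  rw [HCN, SimpleGraph.fromRel_adj]

lemma adj_flp (a c : Fin n → Bool) (i : Fin n) : (HCN n).Adj (a, c) (a, flp c i) := by
  rw [hcn_adj_iff]
  constructor
  · intro h
    exact flp_ne c i ((congrArg Prod.snd h).symm)
  · left; left
    refine ⟨rfl, ?_⟩
    have he : (Finset.univ.filter (fun j => c j ≠ flp c i j)) = {i} := by
      ext j
      simp only [Finset.mem_filter, Finset.mem_univ, true_and, Finset.mem_singleton]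
      constructor
      · intro h
        by_contra hj
        exact h ((flp_ne_apply c hj).symm)
      · rintro rfl
        rw [flp_self]; simp
    rw [he, Finset.card_singleton]

lemma adj_cross_ne {a c : Fin n → Bool} (h : a ≠ c) : (HCN n).Adj (a, c) (c, a) := by
  rw [hcn_adj_iff]
  refine ⟨fun he => h (congrArg Prod.fst he), Or.inl (Or.inr (Or.inl ⟨h, rfl⟩))⟩

lemma adj_cross_eq (hn : 0 < n) (a : Fin n → Bool) :
    (HCN n).Adj (a, a) (fun i => !a i, fun i => !a i) := by
  rw [hcn_adj_iff]
  refine ⟨?_, Or.inl (Or.inr (Or.inr ⟨rfl, rfl⟩))⟩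
  intro he
  have := congrFun (congrArg Prod.fst he) ⟨0, hn⟩
  simp at this

lemma self_ne_not (hn : 0 < n) (x : Fin n → Bool) : x ≠ (fun i => !x i) := fun h => by
  have := congrFun h ⟨0, hn⟩; simp at this

/-- Characterization of the closed neighborhood of a cluster subcube. -/
lemma mem_closed (hn : 0 < n) (x f : Fin n → Bool) (S : Finset (Fin n)) (v : HVert n) :
    v ∈ ({u : HVert n | u.1 = x ∧ ∀ i ∈ S, u.2 i = f i} ∪
          setNbhd n {u : HVert n | u.1 = x ∧ ∀ i ∈ S, u.2 i = f i}) ↔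
      (v.1 = x ∧ (S.filter (fun i => v.2 i ≠ f i)).card ≤ 1) ∨
      (v.2 = x ∧ ∀ i ∈ S, v.1 i = f i) ∨
      ((∀ i ∈ S, x i = f i) ∧ v = (fun i => !x i, fun i => !x i)) := by
  constructor
  · rintro (⟨h1, h2⟩ | ⟨hvX, u, ⟨hu1, hu2⟩, hadj⟩)
    · left
      refine ⟨h1, ?_⟩
      have : S.filter (fun i => v.2 i ≠ f i) = ∅ := by
        rw [Finset.filter_eq_empty_iff]
        intro i hi
        simp only [ne_eq, not_not]
        exact h2 i hi
      rw [this]; simp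
    · rw [hcn_adj_iff] at hadj
      obtain ⟨hne, hrel⟩ := hadj
      rcases hrel with (⟨he, hc⟩ | ⟨hne2, heq⟩ | ⟨he2, heq⟩) | (⟨he, hc⟩ | ⟨hne2, heq⟩ | ⟨he2, heq⟩)
      · -- cube edge, rel u v
        left
        refine ⟨he ▸ hu1, ?_⟩
        calc (S.filter (fun i => v.2 i ≠ f i)).card
            ≤ (Finset.univ.filter (fun i => u.2 i ≠ v.2 i)).card := by
              apply Finset.card_le_card
              intro i hi
              rw [Finset.mem_filter] at hi ⊢
              refine ⟨Finset.mem_univ i, fun h => hi.2 (h ▸ hu2 i hi.1)⟩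
          _ = 1 := hc
      · -- crossing u ≠ (b,b) case
        right; left
        have h1 := congrArg Prod.fst heq
        have h2 := congrArg Prod.snd heq
        simp only at h1 h2
        exact ⟨h2 ▸ hu1, fun i hi => h1 ▸ hu2 i hi⟩
      · -- complement case
        right; right
        have hux : u.2 = x := he2 ▸ hu1
        refine ⟨fun i hi => hux ▸ hu2 i hi, ?_⟩
        rw [heq, he2, hux]
      · -- cube edge, rel v u
        left
        refine ⟨he.trans hu1, ?_⟩
        calc (S.filter (fun i => v.2 i ≠ f i)).card
            ≤ (Finset.univ.filter (fun i => v.2 i ≠ u.2 i)).card := by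
              apply Finset.card_le_card
              intro i hi
              rw [Finset.mem_filter] at hi ⊢
              refine ⟨Finset.mem_univ i, fun h => hi.2 (h ▸ hu2 i hi.1)⟩
          _ = 1 := hc
      · -- crossing, rel v u
        right; left
        have h1 := congrArg Prod.fst heq
        have h2 := congrArg Prod.snd heq
        simp only at h1 h2
        exact ⟨h1 ▸ hu1, fun i hi => h2 ▸ hu2 i hi⟩
      · -- complement, rel v u
        right; right
        have h1 := congrArg Prod.fst heq
        have h2 := congrArg Prod.snd heq
        simp only at h1 h2
        have hv1 : v.1 = fun i => !x i := by
          funext i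
          have h3 : x i = !v.1 i := by
            have h4 := congrFun h1 i
            rw [hu1] at h4
            exact h4
          rw [h3, Bool.not_not]
        have hagree : ∀ i ∈ S, x i = f i := by
          intro i hi
          have hu2i := hu2 i hi
          rw [h2] at hu2i
          simp only at hu2i
          rw [← he2] at hu2i
          have := congrFun hv1 i
          rw [this, Bool.not_not] at hu2i
          exact hu2i
        exact ⟨hagree, Prod.ext hv1 (he2 ▸ hv1)⟩
  · rintro (⟨h1, h2⟩ | ⟨h1, h2⟩ | ⟨h1, h2⟩)
    · by_cases hz : (S.filter (fun i => v.2 i ≠ f i)).card = 0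
      · left
        refine ⟨h1, fun i hi => ?_⟩
        have := Finset.card_eq_zero.mp hz
        rw [Finset.filter_eq_empty_iff] at this
        have := this hi
        exact not_not.mp this
      · right
        have hc1 : (S.filter (fun i => v.2 i ≠ f i)).card = 1 := by omega
        obtain ⟨i0, hi0⟩ := Finset.card_eq_one.mp hc1
        have hi0mem : i0 ∈ S.filter (fun i => v.2 i ≠ f i) := hi0 ▸ Finset.mem_singleton_self i0
        rw [Finset.mem_filter] at hi0mem
        obtain ⟨hi0S, hi0ne⟩ := hi0mem
        refine ⟨fun hvx => hi0ne (hvx.2 i0 hi0S), (x, flp v.2 i0), ⟨rfl, ?_⟩, ?_⟩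
        · intro j hj
          show flp v.2 i0 j = f j
          by_cases hji : j = i0
          · subst hji
            simp only [flp_self]
            revert hi0ne
            cases v.2 j <;> cases f j <;> simp
          · rw [flp_ne_apply _ hji]
            by_contra hne
            have : j ∈ S.filter (fun i => v.2 i ≠ f i) := Finset.mem_filter.mpr ⟨hj, hne⟩
            rw [hi0] at this
            exact hji (Finset.mem_singleton.mp this)
        · have hadj := adj_flp x (flp v.2 i0) i0
          rw [flp_flp] at hadj
          have hv : v = (x, v.2) := Prod.ext h1 rfl
          rw [hv]
          exact hadj
    · by_cases hvx : v.1 = x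
      · left
        refine ⟨hvx, fun i hi => ?_⟩
        rw [h1]
        rw [← hvx]
        exact h2 i hi
      · right
        refine ⟨fun hvX => hvx hvX.1, (x, v.1), ⟨rfl, h2⟩, ?_⟩
        have hadj := adj_cross_ne (a := x) (c := v.1) (fun h => hvx h.symm)
        have hv : v = (v.1, x) := Prod.ext rfl h1
        rw [hv]
        exact hadj
    · right
      refine ⟨?_, (x, x), ⟨rfl, h1⟩, ?_⟩
      · intro hvX
        rw [h2] at hvX
        exact self_ne_not hn x hvX.1.symm
      · rw [h2]
        exact adj_cross_eq hn x

/-- Pair version of `mem_closed`. -/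
lemma mem_closed' (hn : 0 < n) (x f : Fin n → Bool) (S : Finset (Fin n)) (b d : Fin n → Bool) :
    ((b, d) : HVert n) ∈ ({u : HVert n | u.1 = x ∧ ∀ i ∈ S, u.2 i = f i} ∪
          setNbhd n {u : HVert n | u.1 = x ∧ ∀ i ∈ S, u.2 i = f i}) ↔
      (b = x ∧ (S.filter (fun i => d i ≠ f i)).card ≤ 1) ∨
      (d = x ∧ ∀ i ∈ S, b i = f i) ∨
      ((∀ i ∈ S, x i = f i) ∧ b = (fun i => !x i) ∧ d = (fun i => !x i)) := by
  rw [mem_closed hn x f S (b, d)]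
  simp only [Prod.mk.injEq]

lemma bnot_shift {a x : Fin n → Bool} (h : (fun j => !a j) = x) : a = fun j => !x j := by
  funext j
  have h2 : (!a j) = x j := congrFun h j
  rw [← h2, Bool.not_not]

lemma bnot_inj_fun {a x : Fin n → Bool} (h : (fun j => !a j) = (fun j => !x j)) : a = x := by
  funext j
  have h2 : (!a j) = !x j := congrFun h j
  exact Bool.not_inj h2

end HCNaux

open HCNaux in
/-- If X is a subcube of a cluster of HCN_n inducing Q_g, 1 ≤ g ≤ n-1, then
every vertex outside the closed neighborhood N[X] has at least g neighbors
outside N[X]. -/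
theorem stmt_10 (n g : ℕ) (hg1 : 1 ≤ g) (hg2 : g ≤ n - 1)
    (X : Set (HVert n)) (hX : IsClusterSubcube n g X)
    (w : HVert n) (hw : w ∉ X ∪ setNbhd n X) :
    g ≤ (((HCN n).neighborSet w) \ (X ∪ setNbhd n X)).ncard := by
  obtain ⟨x, S, f, hScard, hXeq⟩ := hX
  have hn : 0 < n := by omega
  subst hXeq
  obtain ⟨a, c⟩ := w
  have key : ∀ T : Finset (HVert n),
      ((T : Set (HVert n)) ⊆ (HCN n).neighborSet (a, c) \
        ({u : HVert n | u.1 = x ∧ ∀ i ∈ S, u.2 i = f i} ∪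
          setNbhd n {u : HVert n | u.1 = x ∧ ∀ i ∈ S, u.2 i = f i})) → g ≤ T.card →
      g ≤ ((HCN n).neighborSet (a, c) \
        ({u : HVert n | u.1 = x ∧ ∀ i ∈ S, u.2 i = f i} ∪
          setNbhd n {u : HVert n | u.1 = x ∧ ∀ i ∈ S, u.2 i = f i})).ncard := by
    intro T hsub hcard
    calc g ≤ T.card := hcard
      _ = (T : Set (HVert n)).ncard := (Set.ncard_coe_finset T).symm
      _ ≤ _ := Set.ncard_le_ncard hsub (Set.toFinite _)
  rw [mem_closed' hn x f S a c] at hw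
  push_neg at hw
  obtain ⟨hw1, hw2, hw3⟩ := hw
  by_cases hwx : a = x
  · -- Case A : w in cluster x, ≥ 2 disagreements on S
    subst hwx
    have hcount : 1 < (S.filter (fun i => c i ≠ f i)).card := hw1 rfl
    refine key (Sᶜ.image (fun i => ((a, flp c i) : HVert n))) ?_ ?_
    · intro t ht
      rw [Finset.coe_image] at ht
      obtain ⟨i, hi, rfl⟩ := ht
      have hiS : i ∉ S := Finset.mem_compl.mp hi
      refine ⟨adj_flp a c i, ?_⟩
      intro hM
      rw [mem_closed' hn a f S a (flp c i)] at hM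
      rcases hM with ⟨_, hle⟩ | ⟨ht2, hagr⟩ | ⟨_, hb, _⟩
      · have hfeq : S.filter (fun j => flp c i j ≠ f j) = S.filter (fun j => c j ≠ f j) := by
          apply Finset.filter_congr
          intro j hj
          have hji : j ≠ i := fun h => hiS (by rw [← h]; exact hj)
          rw [flp_ne_apply c hji]
        rw [hfeq] at hle
        omega
      · obtain ⟨j, hj⟩ := Finset.card_pos.mp (by omega :
          0 < (S.filter (fun i => c i ≠ f i)).card)
        rw [Finset.mem_filter] at hj
        have hji : j ≠ i := fun h => hiS (h ▸ hj.1)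
        have : c j = a j := by
          rw [← ht2]
          exact (flp_ne_apply c hji).symm
        exact hj.2 (this.trans (hagr j hj.1))
      · exact self_ne_not hn a hb
    · have hinj : Function.Injective (fun i : Fin n => ((a, flp c i) : HVert n)) := by
        intro i j h
        exact flp_inj (congrArg Prod.snd h)
      rw [Finset.card_image_of_injective _ hinj, Finset.card_compl, Fintype.card_fin, hScard]
      omega
  · -- Case B : w in another cluster
    classical
    set bad := Finset.univ.filter
      (fun i => flp c i = x ∨ flp c i = fun j => !x j) with hbad
    have hbad2 : bad.card ≤ 2 := by
      have h1 : bad.card ≤ ({x, fun j => !x j} : Finset (Fin n → Bool)).card := by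
        apply Finset.card_le_card_of_injOn (fun i => flp c i)
        · intro i hi
          rw [hbad, Finset.mem_coe, Finset.mem_filter] at hi
          show flp c i ∈ ({x, fun j => !x j} : Finset (Fin n → Bool))
          rcases hi.2 with h | h
          · rw [h]; exact Finset.mem_insert_self _ _
          · rw [h]; exact Finset.mem_insert_of_mem (Finset.mem_singleton_self _)
        · intro i _ j _ h
          exact flp_inj h
      refine h1.trans ?_
      refine (Finset.card_insert_le _ _).trans ?_
      simp
    have hgood : ∀ i ∈ badᶜ, ((a, flp c i) : HVert n) ∈ (HCN n).neighborSet (a, c) \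
        ({u : HVert n | u.1 = x ∧ ∀ i ∈ S, u.2 i = f i} ∪
          setNbhd n {u : HVert n | u.1 = x ∧ ∀ i ∈ S, u.2 i = f i}) := by
      intro i hi
      simp only [hbad, Finset.mem_compl, Finset.mem_filter, Finset.mem_univ, true_and,
        not_or] at hi
      obtain ⟨hix, hix'⟩ := hi
      refine ⟨adj_flp a c i, ?_⟩
      intro hM
      rw [mem_closed' hn x f S a (flp c i)] at hM
      rcases hM with ⟨h1, _⟩ | ⟨h1, _⟩ | ⟨_, _, h2⟩
      · exact hwx h1
      · exact hix h1
      · exact hix' h2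
    have hinj : Function.Injective (fun i : Fin n => ((a, flp c i) : HVert n)) := by
      intro i j h
      exact flp_inj (congrArg Prod.snd h)
    have hT0sub : ((badᶜ.image (fun i => ((a, flp c i) : HVert n)) : Finset (HVert n)) :
        Set (HVert n)) ⊆ (HCN n).neighborSet (a, c) \
        ({u : HVert n | u.1 = x ∧ ∀ i ∈ S, u.2 i = f i} ∪
          setNbhd n {u : HVert n | u.1 = x ∧ ∀ i ∈ S, u.2 i = f i}) := by
      intro t ht
      rw [Finset.coe_image] at ht
      obtain ⟨i, hi, rfl⟩ := ht
      exact hgood i hi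
    have hT0card : (badᶜ.image (fun i => ((a, flp c i) : HVert n))).card = n - bad.card := by
      rw [Finset.card_image_of_injective _ hinj, Finset.card_compl, Fintype.card_fin]
    by_cases hb1 : bad.card ≤ 1
    · refine key _ hT0sub ?_
      rw [hT0card]
      omega
    · -- bad.card = 2 : use the crossing neighbor as well
      push_neg at hb1
      rw [Finset.one_lt_card] at hb1
      obtain ⟨i, hi, j, hj, hij⟩ := hb1
      rw [hbad, Finset.mem_filter] at hi hj
      have hflpij : flp c i ≠ flp c j := fun h => hij (flp_inj h)
      have hwit : (∃ i1, flp c i1 = x) ∧ (∃ i2, flp c i2 = fun j => !x j) := by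
        rcases hi.2 with h1 | h1 <;> rcases hj.2 with h2 | h2
        · exact absurd (h1.trans h2.symm) hflpij
        · exact ⟨⟨i, h1⟩, ⟨j, h2⟩⟩
        · exact ⟨⟨j, h2⟩, ⟨i, h1⟩⟩
        · exact absurd (h1.trans h2.symm) hflpij
      obtain ⟨⟨i1, hix⟩, ⟨i2, hix'⟩⟩ := hwit
      have hcx : c ≠ x := fun h => flp_ne c i1 (hix.trans h.symm)
      have hcx' : c ≠ (fun j => !x j) := fun h => flp_ne c i2 (hix'.trans h.symm)
      by_cases hac : a = c
      · -- crossing neighbor is the complement vertex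
        subst hac
        refine key (insert ((fun j => !a j, fun j => !a j) : HVert n)
          (badᶜ.image (fun i => ((a, flp a i) : HVert n)))) ?_ ?_
        · rw [Finset.coe_insert]
          refine Set.insert_subset ?_ hT0sub
          refine ⟨adj_cross_eq hn a, ?_⟩
          intro hM
          rw [mem_closed' hn x f S _ _] at hM
          rcases hM with ⟨h1, _⟩ | ⟨h1, _⟩ | ⟨_, h1, _⟩
          · exact hcx' (bnot_shift h1)
          · exact hcx' (bnot_shift h1)
          · exact hwx (bnot_inj_fun h1)
        · rw [Finset.card_insert_of_notMem, hT0card]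
          · omega
          · intro hmem
            rw [Finset.mem_image] at hmem
            obtain ⟨i0, _, hi0⟩ := hmem
            have := congrArg Prod.fst hi0
            simp only at this
            exact self_ne_not hn a this
      · -- crossing neighbor is the swap vertex
        refine key (insert ((c, a) : HVert n)
          (badᶜ.image (fun i => ((a, flp c i) : HVert n)))) ?_ ?_
        · rw [Finset.coe_insert]
          refine Set.insert_subset ?_ hT0sub
          refine ⟨adj_cross_ne hac, ?_⟩
          intro hM
          rw [mem_closed' hn x f S c a] at hM
          rcases hM with ⟨h1, _⟩ | ⟨h1, _⟩ | ⟨_, h1, _⟩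
          · exact hcx h1
          · exact hwx h1
          · exact hcx' h1
        · rw [Finset.card_insert_of_notMem, hT0card]
          · omega
          · intro hmem
            rw [Finset.mem_image] at hmem
            obtain ⟨i0, _, hi0⟩ := hmem
            have := congrArg Prod.fst hi0
            simp only at this
            exact hac this
end

section
/- For n ≥ 1 and 0 ≤ g ≤ n−1, the R^g-vertex-connectivity of HCN_n equals 2^g(n+1−g): there exists an R^g-vertex-cut of this size, and every R^g-vertex-cut has at least this size. -/
/-- `S` is an R^g-vertex-cut of HCN_n: removing `S` disconnects the graph, and
every remaining vertex keeps at least `g` neighbors among the remaining vertices. -/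
def IsRgCut (n g : ℕ) (S : Set (HVert n)) : Prop :=
  ¬ ((HCN n).induce Sᶜ).Connected ∧
    ∀ v ∉ S, g ≤ (((HCN n).neighborSet v) \ S).ncard

open Finset
open scoped symmDiff

namespace RgCube
variable {α : Type*} [DecidableEq α]

/-- min-degree-≥-g condition for a set of cube vertices (subsets of `U`). -/
def gd (U : Finset α) (g : ℕ) (A : Finset (Finset α)) : Prop :=
  ∀ s ∈ A, g ≤ (U.filter (fun a => s ∆ {a} ∈ A)).card

lemma symmDiff_singleton_cancel (s : Finset α) (a : α) : s ∆ {a} ∆ {a} = s :=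
  symmDiff_symmDiff_cancel_right ..

lemma mem_symmDiff_singleton {s : Finset α} {a b : α} :
    b ∈ s ∆ {a} ↔ (b ∈ s ∧ b ≠ a) ∨ (b = a ∧ a ∉ s) := by
  by_cases hb : b = a <;> subst_eqs <;>
    simp only [Finset.mem_symmDiff, Finset.mem_singleton] <;> tauto

lemma mem_symmDiff_self (a : α) (s : Finset α) : a ∈ s ∆ {a} ↔ a ∉ s := by
  simp [mem_symmDiff_singleton]

lemma mem_symmDiff_other {a b : α} (hab : b ≠ a) (s : Finset α) : b ∈ s ∆ {a} ↔ b ∈ s := by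
  simp [mem_symmDiff_singleton, hab]

lemma symmDiff_singleton_ne (s : Finset α) (a : α) : s ∆ {a} ≠ s := by
  intro h
  have := mem_symmDiff_self a s
  rw [h] at this
  tauto

lemma symmDiff_singleton_subset {s : Finset α} {U : Finset α} (hs : s ⊆ U) {a : α} (ha : a ∈ U) :
    s ∆ {a} ⊆ U := by
  intro b hb
  rcases mem_symmDiff_singleton.mp hb with ⟨h, _⟩ | ⟨h, _⟩
  · exact hs h
  · exact h ▸ ha

lemma gd_half_notmem (U : Finset α) (g : ℕ) (A : Finset (Finset α)) (hgd : gd U g A) (i : α) :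
    gd (U.erase i) (g - 1) (A.filter (fun s => i ∉ s)) := by
  intro s hs
  rw [Finset.mem_filter] at hs
  obtain ⟨hsA, hsi⟩ := hs
  have hsub : (U.filter (fun a => s ∆ {a} ∈ A)).erase i ⊆
      (U.erase i).filter (fun a => s ∆ {a} ∈ A.filter (fun t => i ∉ t)) := by
    intro a ha
    rw [Finset.mem_erase, Finset.mem_filter] at ha
    obtain ⟨hai, haU, haA⟩ := ha
    rw [Finset.mem_filter, Finset.mem_erase, Finset.mem_filter]
    refine ⟨⟨hai, haU⟩, haA, ?_⟩
    rw [mem_symmDiff_other (Ne.symm hai)]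
    exact hsi
  calc g - 1 ≤ (U.filter (fun a => s ∆ {a} ∈ A)).card - 1 := by
        have := hgd s hsA; omega
    _ ≤ ((U.filter (fun a => s ∆ {a} ∈ A)).erase i).card := by
        by_cases hi : i ∈ U.filter (fun a => s ∆ {a} ∈ A)
        · rw [Finset.card_erase_of_mem hi]
        · rw [Finset.erase_eq_of_notMem hi]; omega
    _ ≤ _ := Finset.card_le_card hsub

lemma gd_half_mem (U : Finset α) (g : ℕ) (A : Finset (Finset α)) (hgd : gd U g A) (i : α) :
    gd (U.erase i) (g - 1) (A.filter (fun s => i ∈ s)) := by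
  intro s hs
  rw [Finset.mem_filter] at hs
  obtain ⟨hsA, hsi⟩ := hs
  have hsub : (U.filter (fun a => s ∆ {a} ∈ A)).erase i ⊆
      (U.erase i).filter (fun a => s ∆ {a} ∈ A.filter (fun t => i ∈ t)) := by
    intro a ha
    rw [Finset.mem_erase, Finset.mem_filter] at ha
    obtain ⟨hai, haU, haA⟩ := ha
    rw [Finset.mem_filter, Finset.mem_erase, Finset.mem_filter]
    refine ⟨⟨hai, haU⟩, haA, ?_⟩
    rw [mem_symmDiff_other (Ne.symm hai)]
    exact hsi
  calc g - 1 ≤ (U.filter (fun a => s ∆ {a} ∈ A)).card - 1 := by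
        have := hgd s hsA; omega
    _ ≤ ((U.filter (fun a => s ∆ {a} ∈ A)).erase i).card := by
        by_cases hi : i ∈ U.filter (fun a => s ∆ {a} ∈ A)
        · rw [Finset.card_erase_of_mem hi]
        · rw [Finset.erase_eq_of_notMem hi]; omega
    _ ≤ _ := Finset.card_le_card hsub

/-- L1: a nonempty set with min degree g in the cube has at least 2^g vertices. -/
lemma L1 (U : Finset α) (g : ℕ) (A : Finset (Finset α)) (hgd : gd U g A) (hne : A.Nonempty) :
    2 ^ g ≤ A.card := by
  induction g generalizing U A with
  | zero => simpa [Finset.Nonempty] using Finset.card_pos.mpr hne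
  | succ g ih =>
    obtain ⟨s, hs⟩ := hne
    have h1 := hgd s hs
    have hpos : 0 < (U.filter (fun a => s ∆ {a} ∈ A)).card := by omega
    obtain ⟨i, hi⟩ := Finset.card_pos.mp hpos
    rw [Finset.mem_filter] at hi
    obtain ⟨hiU, hiA⟩ := hi
    -- the two halves at i are both nonempty
    have h0 := gd_half_notmem U (g+1) A hgd i
    have h1' := gd_half_mem U (g+1) A hgd i
    simp only [Nat.add_sub_cancel] at h0 h1'
    have hA0ne : (A.filter (fun t => i ∉ t)).Nonempty := by
      by_cases his : i ∈ s
      · exact ⟨s ∆ {i}, Finset.mem_filter.mpr ⟨hiA, by rw [mem_symmDiff_self]; simp [his]⟩⟩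
      · exact ⟨s, Finset.mem_filter.mpr ⟨hs, his⟩⟩
    have hA1ne : (A.filter (fun t => i ∈ t)).Nonempty := by
      by_cases his : i ∈ s
      · exact ⟨s, Finset.mem_filter.mpr ⟨hs, his⟩⟩
      · exact ⟨s ∆ {i}, Finset.mem_filter.mpr ⟨hiA, by rw [mem_symmDiff_self]; exact his⟩⟩
    have c0 := ih (U.erase i) _ h0 hA0ne
    have c1 := ih (U.erase i) _ h1' hA1ne
    have hsplit := Finset.card_filter_add_card_filter_not (s := A) (p := fun t => i ∈ t)
    have : (A.filter (fun t => i ∈ t)).card + (A.filter (fun t => i ∉ t)).card = A.card := hsplit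
    calc 2 ^ (g+1) = 2^g + 2^g := by ring
    _ ≤ _ := by omega

end RgCube

namespace RgCube
variable {α : Type*} [DecidableEq α]

lemma gd_half_mem_full (U : Finset α) (g : ℕ) (A : Finset (Finset α)) (hgd : gd U g A) (i : α)
    (h0 : A.filter (fun t => i ∉ t) = ∅) :
    gd (U.erase i) g (A.filter (fun t => i ∈ t)) := by
  intro s hs
  rw [Finset.mem_filter] at hs
  obtain ⟨hsA, hsi⟩ := hs
  have hsub : U.filter (fun a => s ∆ {a} ∈ A) ⊆
      (U.erase i).filter (fun a => s ∆ {a} ∈ A.filter (fun t => i ∈ t)) := by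
    intro a ha
    rw [Finset.mem_filter] at ha
    obtain ⟨haU, haA⟩ := ha
    have hai : a ≠ i := by
      intro h
      subst h
      have hmm : a ∉ s ∆ {a} := by simp [mem_symmDiff_self, hsi]
      have : s ∆ {a} ∈ A.filter (fun t => a ∉ t) := Finset.mem_filter.mpr ⟨haA, hmm⟩
      rw [h0] at this; exact absurd this (Finset.notMem_empty _)
    rw [Finset.mem_filter, Finset.mem_erase, Finset.mem_filter]
    exact ⟨⟨hai, haU⟩, haA, by rw [mem_symmDiff_other (Ne.symm hai)]; exact hsi⟩
  exact le_trans (hgd s hsA) (Finset.card_le_card hsub)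

lemma gd_half_notmem_full (U : Finset α) (g : ℕ) (A : Finset (Finset α)) (hgd : gd U g A) (i : α)
    (h1 : A.filter (fun t => i ∈ t) = ∅) :
    gd (U.erase i) g (A.filter (fun t => i ∉ t)) := by
  intro s hs
  rw [Finset.mem_filter] at hs
  obtain ⟨hsA, hsi⟩ := hs
  have hsub : U.filter (fun a => s ∆ {a} ∈ A) ⊆
      (U.erase i).filter (fun a => s ∆ {a} ∈ A.filter (fun t => i ∉ t)) := by
    intro a ha
    rw [Finset.mem_filter] at ha
    obtain ⟨haU, haA⟩ := ha
    have hai : a ≠ i := by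
      intro h
      subst h
      have hmm : a ∈ s ∆ {a} := (mem_symmDiff_self a s).mpr hsi
      have : s ∆ {a} ∈ A.filter (fun t => a ∈ t) := Finset.mem_filter.mpr ⟨haA, hmm⟩
      rw [h1] at this; exact absurd this (Finset.notMem_empty _)
    rw [Finset.mem_filter, Finset.mem_erase, Finset.mem_filter]
    exact ⟨⟨hai, haU⟩, haA, by rw [mem_symmDiff_other (Ne.symm hai)]; exact hsi⟩
  exact le_trans (hgd s hsA) (Finset.card_le_card hsub)

lemma gd_le_card (U : Finset α) (g : ℕ) (A : Finset (Finset α)) (hgd : gd U g A)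
    (hne : A.Nonempty) : g ≤ U.card := by
  obtain ⟨s, hs⟩ := hne
  exact le_trans (hgd s hs) (Finset.card_le_card (Finset.filter_subset _ _))

/-- closed neighborhood of `A` in the cube over `U`. -/
def cl (U : Finset α) (A : Finset (Finset α)) : Finset (Finset α) :=
  A ∪ A.biUnion (fun s => U.image (fun a => s ∆ {a}))

lemma mem_cl {U : Finset α} {A : Finset (Finset α)} {t : Finset α} :
    t ∈ cl U A ↔ t ∈ A ∨ ∃ s ∈ A, ∃ a ∈ U, s ∆ {a} = t := by
  simp [cl]

lemma subset_cl (U : Finset α) (A : Finset (Finset α)) : A ⊆ cl U A :=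
  Finset.subset_union_left

lemma cl_mono_ground {U U' : Finset α} (h : U' ⊆ U) {A A' : Finset (Finset α)} (hA : A' ⊆ A) :
    cl U' A' ⊆ cl U A := by
  intro t ht
  rw [mem_cl] at ht ⊢
  rcases ht with h1 | ⟨s, hs, a, ha, hst⟩
  · exact Or.inl (hA h1)
  · exact Or.inr ⟨s, hA hs, a, h ha, hst⟩

/-- L3: closed neighborhood of a min-degree-g set has size ≥ 2^g (|U|+1-g). -/
lemma L3 (N : ℕ) (U : Finset α) (g : ℕ) (A : Finset (Finset α)) (hN : U.card ≤ N)
    (hgd : gd U g A) (hne : A.Nonempty) :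
    2 ^ g * (U.card + 1 - g) ≤ (cl U A).card := by
  induction N generalizing U g A with
  | zero =>
    have hU : U = ∅ := Finset.card_eq_zero.mp (le_antisymm hN (Nat.zero_le _))
    have hg : g = 0 := le_antisymm (by simpa [hU] using gd_le_card U g A hgd hne) (Nat.zero_le _)
    subst hU hg
    simpa using Finset.card_pos.mpr (hne.mono (subset_cl _ _))
  | succ N ih =>
    rcases Finset.eq_empty_or_nonempty U with rfl | ⟨i, hi⟩
    · have hg : g = 0 := le_antisymm (by simpa using gd_le_card ∅ g A hgd hne) (Nat.zero_le _)
      subst hg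
      simpa using Finset.card_pos.mpr (hne.mono (subset_cl _ _))
    set U' := U.erase i with hU'def
    have hU'c : U'.card + 1 = U.card := by
      rw [hU'def, Finset.card_erase_of_mem hi]
      have : 0 < U.card := Finset.card_pos.mpr ⟨i, hi⟩
      omega
    have hU'N : U'.card ≤ N := by omega
    have hgU : g ≤ U.card := gd_le_card U g A hgd hne
    set A0 := A.filter (fun t => i ∉ t) with hA0def
    set A1 := A.filter (fun t => i ∈ t) with hA1def
    have hmem0 : ∀ t ∈ cl U' A0, i ∉ t := by
      intro t ht
      rw [mem_cl] at ht
      rcases ht with ht | ⟨s, hs, a, ha, rfl⟩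
      · exact (Finset.mem_filter.mp ht).2
      · have hai : i ≠ a := fun h => (Finset.mem_erase.mp ha).1 h.symm
        rw [mem_symmDiff_other hai]
        exact (Finset.mem_filter.mp hs).2
    have hmem1 : ∀ t ∈ cl U' A1, i ∈ t := by
      intro t ht
      rw [mem_cl] at ht
      rcases ht with ht | ⟨s, hs, a, ha, rfl⟩
      · exact (Finset.mem_filter.mp ht).2
      · have hai : i ≠ a := fun h => (Finset.mem_erase.mp ha).1 h.symm
        rw [mem_symmDiff_other hai]
        exact (Finset.mem_filter.mp hs).2
    have hsub0 : cl U' A0 ⊆ cl U A := cl_mono_ground (Finset.erase_subset _ _) (Finset.filter_subset _ _)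
    have hsub1 : cl U' A1 ⊆ cl U A := cl_mono_ground (Finset.erase_subset _ _) (Finset.filter_subset _ _)
    rcases Finset.eq_empty_or_nonempty A0 with h0 | h0ne
    · -- all of A contains i
      have hA1A : A1 = A := by
        rw [hA1def]
        apply Finset.filter_true_of_mem
        intro s hs
        by_contra hsi
        have : s ∈ A0 := Finset.mem_filter.mpr ⟨hs, hsi⟩
        rw [h0] at this; exact absurd this (Finset.notMem_empty _)
      have hgd1 : gd U' g A1 := gd_half_mem_full U g A hgd i h0
      have hc1 := ih U' g A1 hU'N hgd1 (hA1A ▸ hne)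
      -- vertical family
      set F2 := A.image (fun s => s ∆ {i}) with hF2def
      have hF2card : F2.card = A.card := by
        rw [hF2def]
        apply Finset.card_image_of_injOn
        intro s hs t ht hst
        have := congrArg (fun x => x ∆ ({i} : Finset α)) hst
        simpa [symmDiff_singleton_cancel] using this
      have hF2sub : F2 ⊆ cl U A := by
        intro t ht
        rw [hF2def, Finset.mem_image] at ht
        obtain ⟨s, hs, rfl⟩ := ht
        exact mem_cl.mpr (Or.inr ⟨s, hs, i, hi, rfl⟩)
      have hF2mem : ∀ t ∈ F2, i ∉ t := by
        intro t ht
        rw [hF2def, Finset.mem_image] at ht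
        obtain ⟨s, hs, rfl⟩ := ht
        have : i ∈ s := by
          have : s ∈ A1 := hA1A.symm ▸ hs
          exact (Finset.mem_filter.mp this).2
        rw [mem_symmDiff_self]; simp [this]
      have hdisj : Disjoint (cl U' A1) F2 := by
        rw [Finset.disjoint_left]
        intro t ht1 ht2
        exact hF2mem t ht2 (hmem1 t ht1)
      have hcard : (cl U' A1).card + F2.card ≤ (cl U A).card := by
        rw [← Finset.card_union_of_disjoint hdisj]
        exact Finset.card_le_card (Finset.union_subset hsub1 hF2sub)
      have hL1 : 2 ^ g ≤ A.card := L1 U g A hgd hne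
      have harith : 2 ^ g * (U'.card + 1 - g) + 2 ^ g = 2 ^ g * (U.card + 1 - g) := by
        rw [← Nat.mul_succ]
        congr 1
        have hgU' : g ≤ U'.card := gd_le_card U' g A1 hgd1 (hA1A ▸ hne)
        omega
      omega
    rcases Finset.eq_empty_or_nonempty A1 with h1 | h1ne
    · -- all of A avoids i
      have hA0A : A0 = A := by
        rw [hA0def]
        apply Finset.filter_true_of_mem
        intro s hs
        by_contra hsi
        have : s ∈ A1 := Finset.mem_filter.mpr ⟨hs, hsi⟩
        rw [h1] at this; exact absurd this (Finset.notMem_empty _)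
      have hgd0 : gd U' g A0 := gd_half_notmem_full U g A hgd i h1
      have hc0 := ih U' g A0 hU'N hgd0 h0ne
      set F2 := A.image (fun s => s ∆ {i}) with hF2def
      have hF2card : F2.card = A.card := by
        rw [hF2def]
        apply Finset.card_image_of_injOn
        intro s hs t ht hst
        have := congrArg (fun x => x ∆ ({i} : Finset α)) hst
        simpa [symmDiff_singleton_cancel] using this
      have hF2sub : F2 ⊆ cl U A := by
        intro t ht
        rw [hF2def, Finset.mem_image] at ht
        obtain ⟨s, hs, rfl⟩ := ht
        exact mem_cl.mpr (Or.inr ⟨s, hs, i, hi, rfl⟩)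
      have hF2mem : ∀ t ∈ F2, i ∈ t := by
        intro t ht
        rw [hF2def, Finset.mem_image] at ht
        obtain ⟨s, hs, rfl⟩ := ht
        have hsi : i ∉ s := by
          have : s ∈ A0 := hA0A.symm ▸ hs
          exact (Finset.mem_filter.mp this).2
        exact (mem_symmDiff_self i s).mpr hsi
      have hdisj : Disjoint (cl U' A0) F2 := by
        rw [Finset.disjoint_left]
        intro t ht1 ht2
        exact hmem0 t ht1 (hF2mem t ht2)
      have hcard : (cl U' A0).card + F2.card ≤ (cl U A).card := by
        rw [← Finset.card_union_of_disjoint hdisj]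
        exact Finset.card_le_card (Finset.union_subset hsub0 hF2sub)
      have hL1 : 2 ^ g ≤ A.card := L1 U g A hgd hne
      have harith : 2 ^ g * (U'.card + 1 - g) + 2 ^ g = 2 ^ g * (U.card + 1 - g) := by
        rw [← Nat.mul_succ]
        congr 1
        have hgU' : g ≤ U'.card := gd_le_card U' g A0 hgd0 h0ne
        omega
      omega
    · -- both halves nonempty
      have hgd0 : gd U' (g - 1) A0 := gd_half_notmem U g A hgd i
      have hgd1 : gd U' (g - 1) A1 := gd_half_mem U g A hgd i
      have hc0 := ih U' (g - 1) A0 hU'N hgd0 h0ne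
      have hc1 := ih U' (g - 1) A1 hU'N hgd1 h1ne
      have hdisj : Disjoint (cl U' A0) (cl U' A1) := by
        rw [Finset.disjoint_left]
        intro t ht0 ht1
        exact hmem0 t ht0 (hmem1 t ht1)
      have hcard : (cl U' A0).card + (cl U' A1).card ≤ (cl U A).card := by
        rw [← Finset.card_union_of_disjoint hdisj]
        exact Finset.card_le_card (Finset.union_subset hsub0 hsub1)
      rcases Nat.eq_zero_or_pos g with rfl | hgpos
      · simp only [Nat.zero_sub, pow_zero, one_mul] at hc0 hc1 ⊢
        have hU1 : 1 ≤ U.card := Finset.card_pos.mpr ⟨i, hi⟩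
        omega
      · obtain ⟨g', rfl⟩ : ∃ g', g = g' + 1 := ⟨g - 1, by omega⟩
        simp only [Nat.add_sub_cancel] at hc0 hc1
        have harith : 2 ^ (g' + 1) * (U.card + 1 - (g' + 1)) =
            2 ^ g' * (U'.card + 1 - g') + 2 ^ g' * (U'.card + 1 - g') := by
          rw [pow_succ]
          have hgU' : g' + 1 ≤ U.card := hgU
          have : U.card + 1 - (g' + 1) = U'.card + 1 - g' := by omega
          rw [this]; ring
        omega

end RgCube

namespace RgCube
variable {α : Type*} [DecidableEq α]

lemma AL (n g dA dW : ℕ) (hgA : g ≤ dA) (hgW : g ≤ dW) (h1A : 1 ≤ dA) (h1W : 1 ≤ dW)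
    (hsum : dA + dW ≤ n) :
    2 ^ g * (n - g) ≤ max 2 (2 ^ g) * (n - dA) ∨
    2 ^ g * (n - g) ≤ max 2 (2 ^ g) * (n - dW) ∨
    2 ^ dA + 2 ^ dW + 2 ^ g * (n - g) ≤ 2 ^ n := by
  rcases Nat.eq_zero_or_pos g with rfl | hg
  · simp only [pow_zero, one_mul]
    rw [max_eq_left one_le_two]
    rcases le_total dA dW with h | h
    · left; omega
    · right; left; omega
  · have hM : max 2 (2 ^ g) = 2 ^ g := max_eq_right (by
      calc 2 = 2 ^ 1 := (pow_one 2).symm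
      _ ≤ 2 ^ g := Nat.pow_le_pow_right (by norm_num) hg)
    rw [hM]
    by_cases hA : dA = g
    · left; rw [hA]
    by_cases hW : dW = g
    · right; left; rw [hW]
    · right; right
      have hA1 : g + 1 ≤ dA := by omega
      have hW1 : g + 1 ≤ dW := by omega
      have hn : 2 * g + 2 ≤ n := by omega
      have key : ∀ a b : ℕ, g + 1 ≤ a → g + 1 ≤ b → a ≤ b → a + b ≤ n →
          2 ^ a + 2 ^ b + 2 ^ g * (n - g) ≤ 2 ^ n := by
        intro a b ha hb hab habn
        have h1 : 2 ^ a + 2 ^ b ≤ 2 ^ (b + 1) := by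
          rw [pow_succ]
          have := Nat.pow_le_pow_right (show 1 ≤ 2 by norm_num) hab
          omega
        have h2 : (2 : ℕ) ^ (b + 1) ≤ 2 ^ (n - g) :=
          Nat.pow_le_pow_right (by norm_num) (by omega)
        have h3 : (2:ℕ) ^ (n - g) ≤ 2 ^ (n - 1) := Nat.pow_le_pow_right (by norm_num) (by omega)
        have h4 : 2 ^ g * (n - g) ≤ 2 ^ (n - 1) := by
          have hng : n - g ≤ 2 ^ (n - g - 1) := by
            have := Nat.lt_two_pow_self (n := n - g - 1)
            omega
          calc 2 ^ g * (n - g) ≤ 2 ^ g * 2 ^ (n - g - 1) :=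
                Nat.mul_le_mul_left _ hng
          _ = 2 ^ (g + (n - g - 1)) := (pow_add 2 _ _).symm
          _ ≤ 2 ^ (n - 1) := Nat.pow_le_pow_right (by norm_num) (by omega)
        have h5 : 2 ^ (n - 1) + 2 ^ (n - 1) = 2 ^ n := by
          rw [← two_mul, ← pow_succ']
          congr 1
          omega
        omega
      rcases le_total dA dW with h | h
      · exact key dA dW hA1 hW1 h hsum
      · have := key dW dA hW1 hA1 h (by omega)
        omega

/-- the set of coordinates where `A` is non-constant. -/
def dims (U : Finset α) (A : Finset (Finset α)) : Finset α :=
  U.filter (fun i => (∃ s ∈ A, i ∈ s) ∧ ∃ s ∈ A, i ∉ s)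

lemma dims_subset (U : Finset α) (A : Finset (Finset α)) : dims U A ⊆ U :=
  Finset.filter_subset _ _

lemma const_outside {U : Finset α} {A : Finset (Finset α)} (hA : ∀ s ∈ A, s ⊆ U)
    {s t : Finset α} (hs : s ∈ A) (ht : t ∈ A) {i : α} (hi : i ∉ dims U A) :
    (i ∈ s ↔ i ∈ t) := by
  by_cases hiU : i ∈ U
  · rw [dims, Finset.mem_filter] at hi
    push_neg at hi
    constructor
    · intro his
      by_contra hit
      exact absurd (hi hiU ⟨s, hs, his⟩ t ht) (by simpa using hit)
    · intro hit
      by_contra his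
      exact absurd (hi hiU ⟨t, ht, hit⟩ s hs) (by simpa using his)
  · constructor
    · intro his; exact absurd (hA s hs his) hiU
    · intro hit; exact absurd (hA t ht hit) hiU

lemma card_le_pow_dims {U : Finset α} {A : Finset (Finset α)} (hA : ∀ s ∈ A, s ⊆ U) :
    A.card ≤ 2 ^ (dims U A).card := by
  have hinj : Set.InjOn (fun s => s ∩ dims U A) A := by
    intro s hs t ht hst
    simp only at hst
    ext i
    by_cases hi : i ∈ dims U A
    · constructor
      · intro his
        have : i ∈ s ∩ dims U A := Finset.mem_inter.mpr ⟨his, hi⟩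
        rw [hst] at this
        exact (Finset.mem_inter.mp this).1
      · intro hit
        have : i ∈ t ∩ dims U A := Finset.mem_inter.mpr ⟨hit, hi⟩
        rw [← hst] at this
        exact (Finset.mem_inter.mp this).1
    · exact const_outside hA hs ht hi
  calc A.card = (A.image (fun s => s ∩ dims U A)).card :=
        (Finset.card_image_of_injOn hinj).symm
  _ ≤ ((dims U A).powerset).card := by
      apply Finset.card_le_card
      intro t ht
      rw [Finset.mem_image] at ht
      obtain ⟨s, _, rfl⟩ := ht
      exact Finset.mem_powerset.mpr Finset.inter_subset_right
  _ = 2 ^ (dims U A).card := Finset.card_powerset _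

lemma g_le_dims {U : Finset α} {g : ℕ} {A : Finset (Finset α)} (hgd : gd U g A)
    (hne : A.Nonempty) : g ≤ (dims U A).card := by
  obtain ⟨s, hs⟩ := hne
  refine le_trans (hgd s hs) (Finset.card_le_card ?_)
  intro a ha
  rw [Finset.mem_filter] at ha
  obtain ⟨haU, haA⟩ := ha
  rw [dims, Finset.mem_filter]
  by_cases has : a ∈ s
  · exact ⟨haU, ⟨s, hs, has⟩, ⟨s ∆ {a}, haA, by simp [mem_symmDiff_singleton, has]⟩⟩
  · exact ⟨haU, ⟨s ∆ {a}, haA, (mem_symmDiff_self a s).mpr has⟩, ⟨s, hs, has⟩⟩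

lemma dims_nonempty {U : Finset α} {A : Finset (Finset α)} (hA : ∀ s ∈ A, s ⊆ U)
    (h2 : 2 ≤ A.card) : (dims U A).Nonempty := by
  obtain ⟨s, hs, t, ht, hst⟩ := Finset.one_lt_card.mp h2
  have : ¬ (s ∆ t = ∅) := by
    intro h
    exact hst (by simpa [symmDiff_eq_bot] using h)
  obtain ⟨i, hi⟩ := Finset.nonempty_iff_ne_empty.mpr this
  rw [Finset.mem_symmDiff] at hi
  rcases hi with ⟨his, hit⟩ | ⟨hit, his⟩
  · exact ⟨i, Finset.mem_filter.mpr ⟨hA s hs his, ⟨s, hs, his⟩, ⟨t, ht, hit⟩⟩⟩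
  · exact ⟨i, Finset.mem_filter.mpr ⟨hA t ht hit, ⟨t, ht, hit⟩, ⟨s, hs, his⟩⟩⟩

/-- the "outward family" counting bound. -/
lemma fam_bound {U : Finset α} {A W : Finset (Finset α)}
    (hA : ∀ s ∈ A, s ⊆ U) (hW : ∀ t ∈ W, t ⊆ U) (hdisj : Disjoint A W)
    (hAW : ∀ s ∈ A, ∀ a : α, s ∆ {a} ∉ W) :
    A.card + W.card + A.card * (U.card - (dims U A).card) ≤ 2 ^ U.card := by
  classical
  set D := dims U A with hD
  set fam := (A ×ˢ (U \ D)).image (fun p => p.1 ∆ {p.2}) with hfam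
  have hfamcard : fam.card = A.card * (U.card - D.card) := by
    rw [hfam]
    rw [Finset.card_image_of_injOn]
    · rw [Finset.card_product, Finset.card_sdiff_of_subset (dims_subset U A)]
    · rintro ⟨s, a⟩ hsa ⟨t, b⟩ htb hst
      simp only [Finset.mem_coe, Finset.mem_product, Finset.mem_sdiff] at hsa htb
      have hsA := hsa.1; have haU := hsa.2.1; have haD := hsa.2.2
      have htA := htb.1; have hbU := htb.2.1; have hbD := htb.2.2
      simp only at hst
      have hab : a = b := by
        by_contra hab
        have h1 : a ∈ s ∆ {a} ↔ a ∉ s := mem_symmDiff_self a s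
        have h2 : a ∈ t ∆ {b} ↔ a ∈ t := mem_symmDiff_other hab t
        have h3 : a ∈ s ↔ a ∈ t := const_outside hA hsA htA haD
        rw [hst] at h1
        tauto
      subst hab
      have : s = t := by
        have := congrArg (fun x => x ∆ ({a} : Finset α)) hst
        simpa [symmDiff_singleton_cancel] using this
      simp [this]
  have hfamA : Disjoint fam A := by
    rw [Finset.disjoint_left]
    intro x hx hxA
    rw [hfam, Finset.mem_image] at hx
    obtain ⟨⟨s, a⟩, hsa, rfl⟩ := hx
    simp only [Finset.mem_product, Finset.mem_sdiff] at hsa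
    have hsA := hsa.1; have haD := hsa.2.2
    have h1 : a ∈ s ∆ {a} ↔ a ∉ s := mem_symmDiff_self a s
    have h3 : a ∈ s ↔ a ∈ s ∆ {a} := const_outside hA hsA hxA haD
    tauto
  have hfamW : Disjoint fam W := by
    rw [Finset.disjoint_left]
    intro x hx hxW
    rw [hfam, Finset.mem_image] at hx
    obtain ⟨⟨s, a⟩, hsa, rfl⟩ := hx
    simp only [Finset.mem_product, Finset.mem_sdiff] at hsa
    exact hAW s hsa.1 a hxW
  have hsubP : A ∪ W ∪ fam ⊆ U.powerset := by
    intro x hx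
    rw [Finset.mem_union, Finset.mem_union] at hx
    rw [Finset.mem_powerset]
    rcases hx with (hx | hx) | hx
    · exact hA x hx
    · exact hW x hx
    · rw [hfam, Finset.mem_image] at hx
      obtain ⟨⟨s, a⟩, hsa, rfl⟩ := hx
      simp only [Finset.mem_product, Finset.mem_sdiff] at hsa
      exact symmDiff_singleton_subset (hA s hsa.1) hsa.2.1
  calc A.card + W.card + A.card * (U.card - D.card)
      = A.card + W.card + fam.card := by rw [hfamcard]
  _ = (A ∪ W).card + fam.card := by rw [Finset.card_union_of_disjoint hdisj]
  _ = (A ∪ W ∪ fam).card := (Finset.card_union_of_disjoint (by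
      rw [Finset.disjoint_union_left]
      exact ⟨hfamA.symm, hfamW.symm⟩)).symm
  _ ≤ (U.powerset).card := Finset.card_le_card hsubP
  _ = 2 ^ U.card := Finset.card_powerset _

lemma gd_singleton {U : Finset α} {g : ℕ} {s : Finset α} (hgd : gd U g {s}) : g = 0 := by
  have := hgd s (Finset.mem_singleton_self s)
  have hempty : U.filter (fun a => s ∆ {a} ∈ ({s} : Finset (Finset α))) = ∅ := by
    apply Finset.filter_eq_empty_iff.mpr
    intro a _
    rw [Finset.mem_singleton]
    exact symmDiff_singleton_ne s a
  rw [hempty] at this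
  simpa using this

end RgCube

namespace RgCube
variable {α : Type*} [DecidableEq α]

lemma symmDiff_right_comm' (s : Finset α) (i a : α) :
    s ∆ {i} ∆ {a} = s ∆ {a} ∆ {i} := by
  rw [symmDiff_assoc, symmDiff_assoc, symmDiff_comm ({i} : Finset α)]

lemma gd_half_mem_erase (U : Finset α) (g : ℕ) (A : Finset (Finset α)) (hgd : gd U g A) (i : α) :
    gd (U.erase i) (g - 1) ((A.filter (fun t => i ∈ t)).image (fun s => s ∆ {i})) := by
  intro s' hs'
  rw [Finset.mem_image] at hs'
  obtain ⟨s, hs, rfl⟩ := hs'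
  rw [Finset.mem_filter] at hs
  obtain ⟨hsA, hsi⟩ := hs
  have hsub : (U.filter (fun a => s ∆ {a} ∈ A)).erase i ⊆
      (U.erase i).filter (fun a => (s ∆ {i}) ∆ {a} ∈
        (A.filter (fun t => i ∈ t)).image (fun t => t ∆ {i})) := by
    intro a ha
    rw [Finset.mem_erase, Finset.mem_filter] at ha
    obtain ⟨hai, haU, haA⟩ := ha
    rw [Finset.mem_filter, Finset.mem_erase]
    refine ⟨⟨hai, haU⟩, ?_⟩
    rw [Finset.mem_image]
    refine ⟨s ∆ {a}, Finset.mem_filter.mpr ⟨haA, ?_⟩, ?_⟩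
    · rw [mem_symmDiff_other (Ne.symm hai)]; exact hsi
    · rw [symmDiff_right_comm']
  calc g - 1 ≤ (U.filter (fun a => s ∆ {a} ∈ A)).card - 1 := by
        have := hgd s hsA; omega
  _ ≤ ((U.filter (fun a => s ∆ {a} ∈ A)).erase i).card := by
        by_cases hi : i ∈ U.filter (fun a => s ∆ {a} ∈ A)
        · rw [Finset.card_erase_of_mem hi]
        · rw [Finset.erase_eq_of_notMem hi]; omega
  _ ≤ _ := Finset.card_le_card hsub

/-- L4: two mutually non-adjacent min-degree-g sets leave at least 2^g(|U|-g) cube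
vertices uncovered. -/
lemma L4 (N : ℕ) (U : Finset α) (g : ℕ) (A W : Finset (Finset α)) (hN : U.card ≤ N)
    (hgdA : gd U g A) (hgdW : gd U g W) (hAne : A.Nonempty) (hWne : W.Nonempty)
    (hA : ∀ s ∈ A, s ⊆ U) (hW : ∀ t ∈ W, t ⊆ U) (hdisj : Disjoint A W)
    (hAW : ∀ s ∈ A, ∀ a : α, s ∆ {a} ∉ W) :
    A.card + W.card + 2 ^ g * (U.card - g) ≤ 2 ^ U.card := by
  induction N generalizing U g A W with
  | zero =>
    exfalso
    have hU : U = ∅ := Finset.card_eq_zero.mp (le_antisymm hN (Nat.zero_le _))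
    subst hU
    obtain ⟨s, hs⟩ := hAne
    obtain ⟨t, ht⟩ := hWne
    have hs' : s = ∅ := Finset.subset_empty.mp (hA s hs)
    have ht' : t = ∅ := Finset.subset_empty.mp (hW t ht)
    subst hs' ht'
    exact Finset.disjoint_left.mp hdisj hs ht
  | succ N ih =>
    have hWA : ∀ t ∈ W, ∀ a : α, t ∆ {a} ∉ A := by
      intro t ht a hcon
      have := hAW (t ∆ {a}) hcon a
      rw [symmDiff_singleton_cancel] at this
      exact this ht
    -- singleton cases
    by_cases hcA : A.card = 1
    · obtain ⟨s, rfl⟩ := Finset.card_eq_one.mp hcA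
      have hg0 : g = 0 := gd_singleton hgdA
      subst hg0
      simp only [pow_zero, one_mul, Finset.card_singleton]
      set fam := U.image (fun a => s ∆ {a}) with hfam
      have hfamcard : fam.card = U.card := by
        rw [hfam]
        apply Finset.card_image_of_injOn
        intro a ha b hb hab
        simp only at hab
        by_contra hne
        have h1 := mem_symmDiff_self a s
        have h2 := mem_symmDiff_other (Ne.intro hne) s
        rw [hab] at h1
        tauto
      have hdisj1 : Disjoint fam ({s} : Finset (Finset α)) := by
        rw [Finset.disjoint_left]
        intro x hx hxs
        rw [hfam, Finset.mem_image] at hx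
        obtain ⟨a, _, rfl⟩ := hx
        rw [Finset.mem_singleton] at hxs
        exact symmDiff_singleton_ne s a hxs
      have hdisj2 : Disjoint fam W := by
        rw [Finset.disjoint_left]
        intro x hx hxW
        rw [hfam, Finset.mem_image] at hx
        obtain ⟨a, _, rfl⟩ := hx
        exact hAW s (Finset.mem_singleton_self s) a hxW
      have hsubP : {s} ∪ W ∪ fam ⊆ U.powerset := by
        intro x hx
        rw [Finset.mem_union, Finset.mem_union] at hx
        rw [Finset.mem_powerset]
        rcases hx with (hx | hx) | hx
        · rw [Finset.mem_singleton] at hx; rw [hx]; exact hA s (Finset.mem_singleton_self s)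
        · exact hW x hx
        · rw [hfam, Finset.mem_image] at hx
          obtain ⟨a, ha, rfl⟩ := hx
          exact symmDiff_singleton_subset (hA s (Finset.mem_singleton_self s)) ha
      have : ({s} ∪ W ∪ fam).card = 1 + W.card + U.card := by
        rw [Finset.card_union_of_disjoint (by
          rw [Finset.disjoint_union_left]; exact ⟨hdisj1.symm, hdisj2.symm⟩),
          Finset.card_union_of_disjoint hdisj, Finset.card_singleton, hfamcard]
      calc 1 + W.card + (U.card - 0) = ({s} ∪ W ∪ fam).card := by rw [this]; omega
      _ ≤ (U.powerset).card := Finset.card_le_card hsubP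
      _ = 2 ^ U.card := Finset.card_powerset _
    by_cases hcW : W.card = 1
    · obtain ⟨t, rfl⟩ := Finset.card_eq_one.mp hcW
      have hg0 : g = 0 := gd_singleton hgdW
      subst hg0
      simp only [pow_zero, one_mul, Finset.card_singleton]
      set fam := U.image (fun a => t ∆ {a}) with hfam
      have hfamcard : fam.card = U.card := by
        rw [hfam]
        apply Finset.card_image_of_injOn
        intro a ha b hb hab
        simp only at hab
        by_contra hne
        have h1 := mem_symmDiff_self a t
        have h2 := mem_symmDiff_other (Ne.intro hne) t
        rw [hab] at h1
        tauto
      have hdisj1 : Disjoint fam ({t} : Finset (Finset α)) := by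
        rw [Finset.disjoint_left]
        intro x hx hxs
        rw [hfam, Finset.mem_image] at hx
        obtain ⟨a, _, rfl⟩ := hx
        rw [Finset.mem_singleton] at hxs
        exact symmDiff_singleton_ne t a hxs
      have hdisj2 : Disjoint fam A := by
        rw [Finset.disjoint_left]
        intro x hx hxA
        rw [hfam, Finset.mem_image] at hx
        obtain ⟨a, _, rfl⟩ := hx
        exact hWA t (Finset.mem_singleton_self t) a hxA
      have hsubP : A ∪ {t} ∪ fam ⊆ U.powerset := by
        intro x hx
        rw [Finset.mem_union, Finset.mem_union] at hx
        rw [Finset.mem_powerset]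
        rcases hx with (hx | hx) | hx
        · exact hA x hx
        · rw [Finset.mem_singleton] at hx; rw [hx]; exact hW t (Finset.mem_singleton_self t)
        · rw [hfam, Finset.mem_image] at hx
          obtain ⟨a, ha, rfl⟩ := hx
          exact symmDiff_singleton_subset (hW t (Finset.mem_singleton_self t)) ha
      have : (A ∪ {t} ∪ fam).card = A.card + 1 + U.card := by
        rw [Finset.card_union_of_disjoint (by
          rw [Finset.disjoint_union_left]; exact ⟨hdisj2.symm, hdisj1.symm⟩),
          Finset.card_union_of_disjoint (by
            rw [Finset.disjoint_singleton_right]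
            intro hcon
            exact Finset.disjoint_left.mp hdisj hcon (Finset.mem_singleton_self t)),
          Finset.card_singleton, hfamcard]
      calc A.card + 1 + (U.card - 0) = (A ∪ {t} ∪ fam).card := by rw [this]; omega
      _ ≤ (U.powerset).card := Finset.card_le_card hsubP
      _ = 2 ^ U.card := Finset.card_powerset _
    -- both have ≥ 2 elements
    have hA2 : 2 ≤ A.card := by
      have := Finset.card_pos.mpr hAne; omega
    have hW2 : 2 ≤ W.card := by
      have := Finset.card_pos.mpr hWne; omega
    by_cases hcom : ∃ i, i ∈ dims U A ∧ i ∈ dims U W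
    · -- Case 1: common splitting direction
      obtain ⟨i, hiA, hiW⟩ := hcom
      have hiU : i ∈ U := dims_subset U A hiA
      set U' := U.erase i with hU'def
      have hU'c : U'.card + 1 = U.card := by
        rw [hU'def, Finset.card_erase_of_mem hiU]
        have : 0 < U.card := Finset.card_pos.mpr ⟨i, hiU⟩
        omega
      set A0 := A.filter (fun t => i ∉ t) with hA0def
      set W0 := W.filter (fun t => i ∉ t) with hW0def
      set A1 := (A.filter (fun t => i ∈ t)).image (fun s => s ∆ {i}) with hA1def
      set W1 := (W.filter (fun t => i ∈ t)).image (fun s => s ∆ {i}) with hW1def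
      have hA0ne : A0.Nonempty := by
        rw [dims, Finset.mem_filter] at hiA
        obtain ⟨s, hs, hsi⟩ := hiA.2.2
        exact ⟨s, Finset.mem_filter.mpr ⟨hs, hsi⟩⟩
      have hA1ne : A1.Nonempty := by
        rw [dims, Finset.mem_filter] at hiA
        obtain ⟨s, hs, hsi⟩ := hiA.2.1
        exact ⟨s ∆ {i}, Finset.mem_image.mpr ⟨s, Finset.mem_filter.mpr ⟨hs, hsi⟩, rfl⟩⟩
      have hW0ne : W0.Nonempty := by
        rw [dims, Finset.mem_filter] at hiW
        obtain ⟨s, hs, hsi⟩ := hiW.2.2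
        exact ⟨s, Finset.mem_filter.mpr ⟨hs, hsi⟩⟩
      have hW1ne : W1.Nonempty := by
        rw [dims, Finset.mem_filter] at hiW
        obtain ⟨s, hs, hsi⟩ := hiW.2.1
        exact ⟨s ∆ {i}, Finset.mem_image.mpr ⟨s, Finset.mem_filter.mpr ⟨hs, hsi⟩, rfl⟩⟩
      have hsubA0 : ∀ s ∈ A0, s ⊆ U' := by
        intro s hs
        rw [hA0def, Finset.mem_filter] at hs
        intro x hx
        rw [hU'def, Finset.mem_erase]
        exact ⟨fun h => hs.2 (h ▸ hx), hA s hs.1 hx⟩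
      have hsubW0 : ∀ s ∈ W0, s ⊆ U' := by
        intro s hs
        rw [hW0def, Finset.mem_filter] at hs
        intro x hx
        rw [hU'def, Finset.mem_erase]
        exact ⟨fun h => hs.2 (h ▸ hx), hW s hs.1 hx⟩
      have hmemA1 : ∀ s' ∈ A1, i ∉ s' ∧ ∃ s, s ∈ A ∧ i ∈ s ∧ s' = s ∆ {i} := by
        intro s' hs'
        rw [hA1def, Finset.mem_image] at hs'
        obtain ⟨s, hs, rfl⟩ := hs'
        rw [Finset.mem_filter] at hs
        refine ⟨by simp [mem_symmDiff_self, hs.2], s, hs.1, hs.2, rfl⟩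
      have hmemW1 : ∀ s' ∈ W1, i ∉ s' ∧ ∃ s, s ∈ W ∧ i ∈ s ∧ s' = s ∆ {i} := by
        intro s' hs'
        rw [hW1def, Finset.mem_image] at hs'
        obtain ⟨s, hs, rfl⟩ := hs'
        rw [Finset.mem_filter] at hs
        refine ⟨by simp [mem_symmDiff_self, hs.2], s, hs.1, hs.2, rfl⟩
      have hsubA1 : ∀ s ∈ A1, s ⊆ U' := by
        intro s' hs'
        obtain ⟨hi', s, hsA, hsi, rfl⟩ := hmemA1 s' hs'
        intro x hx
        rw [hU'def, Finset.mem_erase]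
        have hxs : x ∈ s := by
          by_cases hxi : x = i
          · exfalso; subst hxi; exact (hmemA1 _ hs').1 hx
          · rwa [mem_symmDiff_other hxi] at hx
        exact ⟨fun h => (hmemA1 _ hs').1 (h ▸ hx), hA s hsA hxs⟩
      have hsubW1 : ∀ s ∈ W1, s ⊆ U' := by
        intro s' hs'
        obtain ⟨hi', s, hsW, hsi, rfl⟩ := hmemW1 s' hs'
        intro x hx
        rw [hU'def, Finset.mem_erase]
        have hxs : x ∈ s := by
          by_cases hxi : x = i
          · exfalso; subst hxi; exact (hmemW1 _ hs').1 hx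
          · rwa [mem_symmDiff_other hxi] at hx
        exact ⟨fun h => (hmemW1 _ hs').1 (h ▸ hx), hW s hsW hxs⟩
      have hdisj0 : Disjoint A0 W0 :=
        Finset.disjoint_of_subset_left (Finset.filter_subset _ _)
          (Finset.disjoint_of_subset_right (Finset.filter_subset _ _) hdisj)
      have hdisj1 : Disjoint A1 W1 := by
        rw [Finset.disjoint_left]
        intro x hx1 hx2
        obtain ⟨_, s, hsA, _, rfl⟩ := hmemA1 x hx1
        obtain ⟨_, t, htW, _, hst⟩ := hmemW1 _ hx2
        have : s = t := by
          have := congrArg (fun x => x ∆ ({i} : Finset α)) hst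
          simpa [symmDiff_singleton_cancel] using this
        subst this
        exact Finset.disjoint_left.mp hdisj hsA htW
      have hAW0 : ∀ s ∈ A0, ∀ a : α, s ∆ {a} ∉ W0 := by
        intro s hs a hcon
        rw [hW0def, Finset.mem_filter] at hcon
        exact hAW s (Finset.mem_filter.mp hs).1 a hcon.1
      have hAW1 : ∀ s ∈ A1, ∀ a : α, s ∆ {a} ∉ W1 := by
        intro s' hs' a hcon
        obtain ⟨_, s, hsA, hsi, rfl⟩ := hmemA1 s' hs'
        obtain ⟨_, t, htW, hti, hst⟩ := hmemW1 _ hcon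
        have : s ∆ {a} = t := by
          have : s ∆ {i} ∆ {a} ∆ {i} = t ∆ {i} ∆ {i} := by rw [hst]
          rwa [symmDiff_singleton_cancel, symmDiff_right_comm' s i a,
            symmDiff_singleton_cancel] at this
        exact hAW s hsA a (this ▸ htW)
      have hgdA0 : gd U' (g - 1) A0 := gd_half_notmem U g A hgdA i
      have hgdW0 : gd U' (g - 1) W0 := gd_half_notmem U g W hgdW i
      have hgdA1 : gd U' (g - 1) A1 := gd_half_mem_erase U g A hgdA i
      have hgdW1 : gd U' (g - 1) W1 := gd_half_mem_erase U g W hgdW i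
      have hN' : U'.card ≤ N := by omega
      have ih0 := ih U' (g - 1) A0 W0 hN' hgdA0 hgdW0 hA0ne hW0ne hsubA0 hsubW0 hdisj0 hAW0
      have ih1 := ih U' (g - 1) A1 W1 hN' hgdA1 hgdW1 hA1ne hW1ne hsubA1 hsubW1 hdisj1 hAW1
      have hcardA : A.card = A0.card + A1.card := by
        rw [hA1def, Finset.card_image_of_injOn (by
          intro s hs t ht hst
          simp only at hst
          have := congrArg (fun x => x ∆ ({i} : Finset α)) hst
          simpa [symmDiff_singleton_cancel] using this)]
        rw [hA0def]
        rw [← Finset.card_filter_add_card_filter_not (s := A) (p := fun t => i ∉ t)]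
        congr 2
        simp
      have hcardW : W.card = W0.card + W1.card := by
        rw [hW1def, Finset.card_image_of_injOn (by
          intro s hs t ht hst
          simp only at hst
          have := congrArg (fun x => x ∆ ({i} : Finset α)) hst
          simpa [symmDiff_singleton_cancel] using this)]
        rw [hW0def]
        rw [← Finset.card_filter_add_card_filter_not (s := W) (p := fun t => i ∉ t)]
        congr 2
        simp
      -- now pure arithmetic
      have hn2 : 2 ≤ U.card := by
        -- A0 and W0 are disjoint nonempty subsets of the powerset of U'
        obtain ⟨s, hs⟩ := hA0ne
        obtain ⟨t, ht⟩ := hW0ne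
        have hst : s ≠ t := fun h => Finset.disjoint_left.mp hdisj0 hs (h ▸ ht)
        have hsub : ({s, t} : Finset (Finset α)) ⊆ U'.powerset := by
          intro x hx
          rw [Finset.mem_insert, Finset.mem_singleton] at hx
          rcases hx with rfl | rfl
          · exact Finset.mem_powerset.mpr (hsubA0 x hs)
          · exact Finset.mem_powerset.mpr (hsubW0 x ht)
        have h2 : 2 ≤ 2 ^ U'.card := by
          calc 2 = ({s, t} : Finset (Finset α)).card := by rw [Finset.card_insert_of_notMem (by simpa using hst), Finset.card_singleton]
          _ ≤ (U'.powerset).card := Finset.card_le_card hsub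
          _ = 2 ^ U'.card := Finset.card_powerset _
        have : 1 ≤ U'.card := by
          rcases Nat.eq_zero_or_pos U'.card with h | h
          · rw [h] at h2; norm_num at h2
          · exact h
        omega
      have hpowU : 2 ^ U'.card + 2 ^ U'.card = 2 ^ U.card := by
        rw [← two_mul, ← pow_succ', hU'c]
      rcases Nat.eq_zero_or_pos g with rfl | hgpos
      · simp only [Nat.zero_sub, pow_zero, one_mul, Nat.sub_zero] at ih0 ih1 ⊢
        omega
      · obtain ⟨g', rfl⟩ : ∃ g', g = g' + 1 := ⟨g - 1, by omega⟩
        simp only [Nat.add_sub_cancel] at ih0 ih1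
        have harith : 2 ^ (g' + 1) * (U.card - (g' + 1)) =
            2 ^ g' * (U'.card - g') + 2 ^ g' * (U'.card - g') := by
          rw [pow_succ]
          have : U.card - (g' + 1) = U'.card - g' := by omega
          rw [this]; ring
        omega
    · -- Case 2: disjoint dimension sets
      push_neg at hcom
      have hdimdisj : Disjoint (dims U A) (dims U W) := by
        rw [Finset.disjoint_left]
        exact fun i h1 h2 => hcom i h1 h2
      have hdsum : (dims U A).card + (dims U W).card ≤ U.card := by
        rw [← Finset.card_union_of_disjoint hdimdisj]
        exact Finset.card_le_card (Finset.union_subset (dims_subset U A) (dims_subset U W))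
      have hgA' : g ≤ (dims U A).card := g_le_dims hgdA hAne
      have hgW' : g ≤ (dims U W).card := g_le_dims hgdW hWne
      have h1A : 1 ≤ (dims U A).card := Finset.card_pos.mpr (dims_nonempty hA hA2)
      have h1W : 1 ≤ (dims U W).card := Finset.card_pos.mpr (dims_nonempty hW hW2)
      have hMA : max 2 (2 ^ g) ≤ A.card := by
        have := L1 U g A hgdA hAne
        simp only [max_le_iff]
        exact ⟨hA2, this⟩
      have hMW : max 2 (2 ^ g) ≤ W.card := by
        have := L1 U g W hgdW hWne
        simp only [max_le_iff]
        exact ⟨hW2, this⟩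
      have hfamA := fam_bound hA hW hdisj hAW
      have hfamW := fam_bound hW hA hdisj.symm hWA
      have hcA : A.card ≤ 2 ^ (dims U A).card := card_le_pow_dims hA
      have hcW : W.card ≤ 2 ^ (dims U W).card := card_le_pow_dims hW
      rcases AL U.card g (dims U A).card (dims U W).card hgA' hgW' h1A h1W hdsum with
        h | h | h
      · -- use A's family
        have h2 : 2 ^ g * (U.card - g) ≤ A.card * (U.card - (dims U A).card) :=
          le_trans h (Nat.mul_le_mul_right _ hMA)
        omega
      · have h2 : 2 ^ g * (U.card - g) ≤ W.card * (U.card - (dims U W).card) :=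
          le_trans h (Nat.mul_le_mul_right _ hMW)
        omega
      · -- use the subcube size bound
        have hsubP : A ∪ W ⊆ U.powerset := by
          intro x hx
          rw [Finset.mem_union] at hx
          rw [Finset.mem_powerset]
          rcases hx with hx | hx
          · exact hA x hx
          · exact hW x hx
        have := Finset.card_le_card hsubP
        rw [Finset.card_union_of_disjoint hdisj, Finset.card_powerset] at this
        omega

end RgCube


namespace RgHCN
open RgCube Finset
open scoped symmDiff

variable {n : ℕ}

def flipb (a : Fin n) (y : Fin n → Bool) : Fin n → Bool := Function.update y a (!y a)

def sF (y : Fin n → Bool) : Finset (Fin n) := Finset.univ.filter (fun i => y i = true)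

lemma mem_sF {y : Fin n → Bool} {i : Fin n} : i ∈ sF y ↔ y i = true := by simp [sF]

lemma sF_inj {y z : Fin n → Bool} (h : sF y = sF z) : y = z := by
  funext i
  have h2 : y i = true ↔ z i = true := by rw [← mem_sF, ← mem_sF, h]
  revert h2
  cases y i <;> cases z i <;> simp

lemma flipb_apply_same (a : Fin n) (y : Fin n → Bool) : flipb a y a = !y a := by
  simp [flipb]

lemma flipb_apply_other {a i : Fin n} (h : i ≠ a) (y : Fin n → Bool) : flipb a y i = y i := by
  simp [flipb, Function.update_of_ne h]

lemma sF_flipb (a : Fin n) (y : Fin n → Bool) : sF (flipb a y) = sF y ∆ {a} := by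
  ext i
  by_cases hia : i = a
  · subst hia
    rw [mem_sF, flipb_apply_same, mem_symmDiff_self, mem_sF]
    cases y i <;> simp
  · rw [mem_sF, flipb_apply_other hia, mem_symmDiff_other hia, mem_sF]

lemma flipb_flipb (a : Fin n) (y : Fin n → Bool) : flipb a (flipb a y) = y := by
  funext i
  by_cases hia : i = a
  · subst hia; rw [flipb_apply_same, flipb_apply_same, Bool.not_not]
  · rw [flipb_apply_other hia, flipb_apply_other hia]

lemma flipb_ne (a : Fin n) (y : Fin n → Bool) : flipb a y ≠ y := by
  intro h
  have := congrFun h a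
  rw [flipb_apply_same] at this
  cases y a <;> simp_all

lemma flipb_inj_idx {a b : Fin n} {y : Fin n → Bool} (h : flipb a y = flipb b y) : a = b := by
  by_contra hab
  have := congrFun h a
  rw [flipb_apply_same, flipb_apply_other hab] at this
  cases y a <;> simp_all

lemma ham_iff {y y' : Fin n → Bool} :
    (Finset.univ.filter (fun i => y i ≠ y' i)).card = 1 ↔ ∃ a, y' = flipb a y := by
  constructor
  · intro h
    obtain ⟨a, ha⟩ := Finset.card_eq_one.mp h
    have hmem : ∀ i : Fin n, y i ≠ y' i ↔ i = a := by
      intro i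
      constructor
      · intro hi
        have : i ∈ Finset.univ.filter (fun i => y i ≠ y' i) := by
          simp [hi]
        rw [ha, Finset.mem_singleton] at this
        exact this
      · intro hi
        subst hi
        have : i ∈ ({i} : Finset (Fin n)) := Finset.mem_singleton_self i
        rw [← ha, Finset.mem_filter] at this
        exact this.2
    refine ⟨a, funext fun i => ?_⟩
    by_cases hia : i = a
    · subst hia
      have : y i ≠ y' i := (hmem i).mpr rfl
      rw [flipb_apply_same]
      cases hy : y i <;> cases hy' : y' i <;> simp_all
    · rw [flipb_apply_other hia]
      have : ¬ (y i ≠ y' i) := fun h => hia ((hmem i).mp h)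
      push_neg at this
      exact this.symm
  · rintro ⟨a, rfl⟩
    have : Finset.univ.filter (fun i => y i ≠ flipb a y i) = {a} := by
      ext i
      rw [Finset.mem_filter, Finset.mem_singleton]
      constructor
      · rintro ⟨-, hi⟩
        by_contra hia
        rw [flipb_apply_other hia] at hi
        exact hi rfl
      · rintro rfl
        refine ⟨Finset.mem_univ i, ?_⟩
        rw [flipb_apply_same]
        cases y i <;> simp
    rw [this, Finset.card_singleton]

/-- the crossing-edge partner. -/
def ptr (v : HVert n) : HVert n :=
  if v.1 = v.2 then (fun i => !v.1 i, fun i => !v.2 i) else (v.2, v.1)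

lemma negb_ne (hn : 1 ≤ n) (x : Fin n → Bool) : (fun i => !x i) ≠ x := by
  intro h
  have := congrFun h ⟨0, hn⟩
  cases x ⟨0, hn⟩ <;> simp_all

lemma ptr_invol (v : HVert n) : ptr (ptr v) = v := by
  by_cases h : v.1 = v.2
  · have h1 : ptr v = (fun i => !v.1 i, fun i => !v.2 i) := if_pos h
    have h2 : ptr (ptr v) = (fun i => !(!v.1 i), fun i => !(!v.2 i)) := by
      rw [h1, ptr, if_pos (show (fun i => !v.1 i) = (fun i => !v.2 i) by rw [h])]
    rw [h2]
    exact Prod.ext (funext fun i => Bool.not_not _) (funext fun i => Bool.not_not _)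
  · have h1 : ptr v = (v.2, v.1) := if_neg h
    rw [h1, ptr, if_neg (fun hc => h hc.symm)]

lemma ptr_fst_ne (hn : 1 ≤ n) (v : HVert n) : (ptr v).1 ≠ v.1 := by
  by_cases h : v.1 = v.2
  · rw [ptr, if_pos h]
    exact negb_ne hn v.1
  · rw [ptr, if_neg h]
    exact fun hc => h hc.symm

lemma ptr_ne (hn : 1 ≤ n) (v : HVert n) : ptr v ≠ v :=
  fun h => ptr_fst_ne hn v (by rw [h])

lemma ptr_inj (hn : 1 ≤ n) {u v : HVert n} (h : ptr u = ptr v) : u = v := by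
  rw [← ptr_invol u, h, ptr_invol]

lemma ptr_eq_iff (hn : 1 ≤ n) {u v : HVert n} : v = ptr u ↔ u = ptr v := by
  constructor
  · rintro rfl; rw [ptr_invol]
  · rintro rfl; rw [ptr_invol]

lemma ptr_fst (v : HVert n) : (ptr v).1 = v.2 ∨ ((ptr v).1 = fun i => !v.1 i) := by
  by_cases h : v.1 = v.2
  · right; rw [ptr, if_pos h]
  · left; rw [ptr, if_neg h]

lemma adj_iff (hn : 1 ≤ n) {u v : HVert n} :
    (HCN n).Adj u v ↔ (u.1 = v.1 ∧ ∃ a, v.2 = flipb a u.2) ∨ v = ptr u := by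
  rw [HCN, SimpleGraph.fromRel_adj]
  constructor
  · rintro ⟨hne, h | h⟩
    · rcases h with ⟨h1, h2⟩ | ⟨h1, h2⟩ | ⟨h1, h2⟩
      · exact Or.inl ⟨h1, ham_iff.mp h2⟩
      · right; rw [ptr, if_neg h1, h2]
      · right; rw [ptr, if_pos h1, h2]
    · rcases h with ⟨h1, h2⟩ | ⟨h1, h2⟩ | ⟨h1, h2⟩
      · left
        refine ⟨h1.symm, ham_iff.mp ?_⟩
        rw [← h2]
        congr 1
        ext i
        simp only [Finset.mem_filter, Finset.mem_univ, true_and]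
        exact ne_comm
      · rw [ptr_eq_iff hn]
        right; rw [ptr, if_neg h1, h2]
      · rw [ptr_eq_iff hn]
        right; rw [ptr, if_pos h1, h2]
  · rintro (⟨h1, a, ha⟩ | rfl)
    · refine ⟨?_, Or.inl (Or.inl ⟨h1, ham_iff.mpr ⟨a, ha⟩⟩)⟩
      intro h
      rw [h] at ha
      exact flipb_ne a v.2 ha.symm
    · refine ⟨Ne.symm (ptr_ne hn u), ?_⟩
      by_cases h : u.1 = u.2
      · exact Or.inl (Or.inr (Or.inr ⟨h, by rw [ptr, if_pos h]⟩))
      · exact Or.inl (Or.inr (Or.inl ⟨h, by rw [ptr, if_neg h]⟩))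

lemma adj_ptr (hn : 1 ≤ n) (u : HVert n) : (HCN n).Adj u (ptr u) :=
  (adj_iff hn).mpr (Or.inr rfl)

lemma adj_flipb (hn : 1 ≤ n) (u : HVert n) (a : Fin n) :
    (HCN n).Adj u (u.1, flipb a u.2) :=
  (adj_iff hn).mpr (Or.inl ⟨rfl, a, rfl⟩)

lemma nbr_cases (hn : 1 ≤ n) {u w : HVert n} (h : (HCN n).Adj u w) :
    w = ptr u ∨ ∃ a, w = (u.1, flipb a u.2) := by
  rcases (adj_iff hn).mp h with ⟨h1, a, ha⟩ | h
  · right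
    exact ⟨a, Prod.ext h1.symm ha⟩
  · left; exact h


section Existence

def az : Fin n → Bool := fun _ => false
def ab : Fin n → Bool := fun _ => true

def unF (s : Finset (Fin n)) : Fin n → Bool := fun i => decide (i ∈ s)

lemma sF_unF (s : Finset (Fin n)) : sF (unF s) = s := by
  ext i; simp [mem_sF, unF]

lemma unF_sF (y : Fin n → Bool) : unF (sF y) = y := by
  funext i
  rcases Bool.eq_false_or_eq_true (y i) with h | h <;>
    simp [unF, mem_sF, h]

lemma unF_inj {s t : Finset (Fin n)} (h : unF s = unF t) : s = t := by
  rw [← sF_unF s, h, sF_unF]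

lemma sF_az : sF (az : Fin n → Bool) = ∅ := by
  ext i; simp [mem_sF, az]

lemma sF_ab : sF (ab : Fin n → Bool) = Finset.univ := by
  ext i; simp [mem_sF, ab]

lemma az_ne_ab (hn : 1 ≤ n) : (az : Fin n → Bool) ≠ ab := by
  intro h
  have := congrFun h ⟨0, hn⟩
  simp [az, ab] at this

lemma unF_eq_az {s : Finset (Fin n)} : unF s = az ↔ s = ∅ := by
  constructor
  · intro h
    rw [← sF_unF s, h, sF_az]
  · rintro rfl
    funext i; simp [unF, az]

variable (n) in
/-- the cut set: neighborhood of a g-subcube of the `az`-cluster. -/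
def FS (D : Finset (Fin n)) : Finset (HVert n) :=
  ((D.powerset ×ˢ (Finset.univ \ D)).image
    (fun p => ((az, unF (insert p.2 p.1)) : HVert n))) ∪
  (((D.powerset.erase ∅).image (fun w => ((unF w, az) : HVert n))) ∪ {(ab, ab)})

lemma insert_sdiff_of_mem {w : Finset (Fin n)} {D : Finset (Fin n)} (hw : w ⊆ D) {j : Fin n}
    (hj : j ∉ D) : insert j w \ D = {j} := by
  ext x
  simp only [Finset.mem_sdiff, Finset.mem_insert, Finset.mem_singleton]
  constructor
  · rintro ⟨rfl | hx, hxD⟩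
    · rfl
    · exact absurd (hw hx) hxD
  · rintro rfl
    exact ⟨Or.inl rfl, hj⟩

lemma mem_FS {D : Finset (Fin n)} {v : HVert n} :
    v ∈ FS n D ↔ (v.1 = az ∧ (sF v.2 \ D).card = 1) ∨
      (sF v.1 ⊆ D ∧ v.1 ≠ az ∧ v.2 = az) ∨ v = (ab, ab) := by
  rw [FS]
  simp only [Finset.mem_union, Finset.mem_image, Finset.mem_product, Finset.mem_powerset,
    Finset.mem_sdiff, Finset.mem_univ, true_and, Finset.mem_erase, Finset.mem_singleton]
  constructor
  · rintro (⟨⟨w, j⟩, ⟨hw, hj⟩, rfl⟩ | ⟨w, ⟨hwne, hw⟩, rfl⟩ | rfl)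
    · left
      refine ⟨rfl, ?_⟩
      simp only
      rw [sF_unF, insert_sdiff_of_mem hw hj, Finset.card_singleton]
    · right; left
      refine ⟨by rw [sF_unF]; exact hw, ?_, rfl⟩
      simp only
      rw [Ne, unF_eq_az]
      exact hwne
    · right; right; rfl
  · rintro (⟨h1, h2⟩ | ⟨h1, h2, h3⟩ | rfl)
    · left
      obtain ⟨j, hj⟩ := Finset.card_eq_one.mp h2
      have hjD : j ∉ D := by
        have : j ∈ sF v.2 \ D := hj ▸ Finset.mem_singleton_self j
        exact (Finset.mem_sdiff.mp this).2
      refine ⟨⟨sF v.2 ∩ D, j⟩, ⟨Finset.inter_subset_right, hjD⟩, ?_⟩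
      have hins : insert j (sF v.2 ∩ D) = sF v.2 := by
        ext x
        simp only [Finset.mem_insert, Finset.mem_inter]
        constructor
        · rintro (rfl | ⟨hx, _⟩)
          · have : x ∈ sF v.2 \ D := hj ▸ Finset.mem_singleton_self x
            exact (Finset.mem_sdiff.mp this).1
          · exact hx
        · intro hx
          by_cases hxD : x ∈ D
          · exact Or.inr ⟨hx, hxD⟩
          · left
            have : x ∈ sF v.2 \ D := Finset.mem_sdiff.mpr ⟨hx, hxD⟩
            rw [hj, Finset.mem_singleton] at this
            exact this
      simp only
      rw [hins, unF_sF, ← h1]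
    · right; left
      refine ⟨sF v.1, ⟨?_, h1⟩, ?_⟩
      · intro hcon
        apply h2
        rw [← unF_sF v.1, hcon]
        funext i; simp [unF, az]
      · rw [unF_sF, ← h3]
    · right; right; rfl

lemma card_FS (hn : 1 ≤ n) {g : ℕ} (hg : g ≤ n - 1) {D : Finset (Fin n)} (hD : D.card = g) :
    (FS n D).card = 2 ^ g * (n + 1 - g) := by
  have hgn : g ≤ n := le_trans hg (Nat.sub_le n 1)
  rw [FS]
  have hcard1 : ((D.powerset ×ˢ (Finset.univ \ D)).image
      (fun p => ((az, unF (insert p.2 p.1)) : HVert n))).card = 2 ^ g * (n - g) := by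
    rw [Finset.card_image_of_injOn, Finset.card_product, Finset.card_powerset, hD,
      Finset.card_sdiff_of_subset (Finset.subset_univ D), Finset.card_univ, Fintype.card_fin, hD]
    rintro ⟨w1, j1⟩ h1 ⟨w2, j2⟩ h2 heq
    simp only [Finset.mem_coe, Finset.mem_product, Finset.mem_powerset, Finset.mem_sdiff] at h1 h2
    simp only [Prod.mk.injEq] at heq
    have hins : insert j1 w1 = insert j2 w2 := unF_inj heq.2
    have hj : j1 = j2 := by
      have e1 : insert j1 w1 \ D = {j1} := insert_sdiff_of_mem h1.1 h1.2.2
      have e2 : insert j2 w2 \ D = {j2} := insert_sdiff_of_mem h2.1 h2.2.2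
      rw [hins, e2] at e1
      exact (Finset.singleton_injective e1).symm
    have hw : w1 = w2 := by
      have e1 : insert j1 w1 ∩ D = w1 := by
        rw [Finset.insert_inter_of_notMem h1.2.2]
        exact Finset.inter_eq_left.mpr h1.1
      have e2 : insert j2 w2 ∩ D = w2 := by
        rw [Finset.insert_inter_of_notMem h2.2.2]
        exact Finset.inter_eq_left.mpr h2.1
      rw [← e1, ← e2, hins]
    rw [hj, hw]
  have hcard2 : (((D.powerset.erase ∅).image (fun w => ((unF w, az) : HVert n))) ∪
      {(ab, ab)}).card = 2 ^ g := by
    rw [Finset.card_union_of_disjoint, Finset.card_image_of_injOn]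
    · rw [Finset.card_erase_of_mem (Finset.mem_powerset.mpr (Finset.empty_subset D)),
        Finset.card_powerset, hD, Finset.card_singleton]
      have : 1 ≤ 2 ^ g := Nat.one_le_two_pow
      omega
    · intro w1 h1 w2 h2 heq
      simp only [Prod.mk.injEq] at heq
      exact unF_inj heq.1
    · rw [Finset.disjoint_singleton_right, Finset.mem_image]
      rintro ⟨w, hw, heq⟩
      have := congrArg Prod.snd heq
      simp only at this
      exact az_ne_ab hn this
  rw [Finset.card_union_of_disjoint, hcard1, hcard2]
  · have : n + 1 - g = (n - g) + 1 := by omega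
    rw [this, Nat.mul_succ]
  · rw [Finset.disjoint_left]
    rintro v hv1 hv2
    rw [Finset.mem_image] at hv1
    obtain ⟨p, hp, rfl⟩ := hv1
    rw [Finset.mem_union, Finset.mem_image, Finset.mem_singleton] at hv2
    rcases hv2 with ⟨w, hw, heq⟩ | heq
    · have h2 : unF w = az := congrArg Prod.fst heq
      rw [Finset.mem_erase] at hw
      exact hw.1 (unF_eq_az.mp h2)
    · have h2 := congrArg Prod.fst heq
      simp only at h2
      exact az_ne_ab hn h2

end Existence



section ExistenceMain

lemma symmDiff_sdiff_of_mem {s D : Finset (Fin n)} (hs : s ⊆ D) {a : Fin n} (ha : a ∉ D) :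
    (s ∆ {a}) \ D = {a} := by
  ext x
  simp only [Finset.mem_sdiff, Finset.mem_singleton, mem_symmDiff_singleton]
  constructor
  · rintro ⟨⟨hx, _⟩ | ⟨rfl, _⟩, hxD⟩
    · exact absurd (hs hx) hxD
    · rfl
  · rintro rfl
    exact ⟨Or.inr ⟨rfl, fun h => ha (hs h)⟩, ha⟩

lemma symmDiff_sdiff_of_mem' {s D : Finset (Fin n)} {a : Fin n} (ha : a ∈ D) :
    (s ∆ {a}) \ D = s \ D := by
  ext x
  by_cases hxa : x = a
  · subst hxa
    simp only [Finset.mem_sdiff]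
    constructor
    · rintro ⟨_, hxD⟩; exact absurd ha hxD
    · rintro ⟨_, hxD⟩; exact absurd ha hxD
  · simp only [Finset.mem_sdiff, mem_symmDiff_other hxa]

lemma le_ncard_of_finset {β : Type*} [Finite β] (F : Finset β) (T : Set β) (h : ∀ x ∈ F, x ∈ T) :
    F.card ≤ T.ncard := by
  classical
  calc F.card = (↑F : Set β).ncard := (Set.ncard_coe_finset F).symm
  _ ≤ T.ncard := Set.ncard_le_ncard (fun x hx => h x (Finset.mem_coe.mp hx)) (Set.toFinite T)

lemma Q_closed (hn : 1 ≤ n) {D : Finset (Fin n)} (hDn : D.card ≤ n - 1)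
    {z w : HVert n} (hz1 : z.1 = az) (hz2 : sF z.2 ⊆ D)
    (hadj : (HCN n).Adj z w) (hw : w ∉ FS n D) :
    w.1 = az ∧ sF w.2 ⊆ D := by
  rcases nbr_cases hn hadj with rfl | ⟨a, rfl⟩
  · exfalso
    apply hw
    rw [mem_FS]
    by_cases hzz : z.1 = z.2
    · right; right
      rw [ptr, if_pos hzz]
      have h1 : (fun i => !z.1 i) = ab := by
        funext i; rw [hz1]; simp [az, ab]
      have h2 : (fun i => !z.2 i) = ab := by
        funext i; rw [← hzz, hz1]; simp [az, ab]
      rw [h1, h2]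
    · right; left
      rw [ptr, if_neg hzz]
      refine ⟨hz2, ?_, hz1⟩
      intro hcon
      exact hzz (hz1.trans hcon.symm)
  · by_cases haD : a ∈ D
    · refine ⟨hz1, ?_⟩
      simp only [sF_flipb]
      exact symmDiff_singleton_subset hz2 haD
    · exfalso
      apply hw
      rw [mem_FS]
      left
      refine ⟨hz1, ?_⟩
      simp only [sF_flipb]
      rw [symmDiff_sdiff_of_mem hz2 haD, Finset.card_singleton]

lemma exists_rg_cut (hn : 1 ≤ n) (g : ℕ) (hg : g ≤ n - 1) :
    ∃ S : Set (HVert n), IsRgCut n g S ∧ S.ncard = 2 ^ g * (n + 1 - g) := by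
  have hgn : g ≤ n := le_trans hg (Nat.sub_le n 1)
  obtain ⟨D, hDsub, hD⟩ := Finset.exists_subset_card_eq
    (show g ≤ (Finset.univ : Finset (Fin n)).card by rw [Finset.card_univ, Fintype.card_fin]; exact hgn)
  have hDn : D.card ≤ n - 1 := hD ▸ hg
  refine ⟨↑(FS n D), ⟨?_, ?_⟩, by rw [Set.ncard_coe_finset, card_FS hn hg hD]⟩
  · -- not connected
    intro hconn
    have hu : ((az, az) : HVert n) ∈ (↑(FS n D) : Set (HVert n))ᶜ := by
      intro hcon
      rw [Finset.mem_coe, mem_FS] at hcon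
      rcases hcon with ⟨_, h2⟩ | ⟨_, h2, _⟩ | h
      · rw [sF_az] at h2; simp at h2
      · exact h2 rfl
      · exact az_ne_ab hn (congrArg Prod.fst h)
    have hv0 : ((ab, az) : HVert n) ∈ (↑(FS n D) : Set (HVert n))ᶜ := by
      intro hcon
      rw [Finset.mem_coe, mem_FS] at hcon
      rcases hcon with ⟨h1, _⟩ | ⟨h1, _, _⟩ | h
      · exact az_ne_ab hn ((show ((ab, az) : HVert n).1 = az from h1).symm)
      · rw [show ((ab, az) : HVert n).1 = ab from rfl, sF_ab] at h1
        have := Finset.card_le_card h1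
        rw [Finset.card_univ, Fintype.card_fin, hD] at this
        omega
      · exact az_ne_ab hn (show az = ab from congrArg Prod.snd h) |>.elim
    have hreach := hconn.preconnected ⟨(az, az), hu⟩ ⟨(ab, az), hv0⟩
    rw [SimpleGraph.reachable_iff_reflTransGen] at hreach
    have hinv : ∀ w : ↥(↑(FS n D) : Set (HVert n))ᶜ,
        Relation.ReflTransGen ((HCN n).induce (↑(FS n D) : Set (HVert n))ᶜ).Adj
          ⟨(az, az), hu⟩ w → (w : HVert n).1 = az ∧ sF (w : HVert n).2 ⊆ D := by
      intro w hw
      induction hw with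
      | refl => exact ⟨rfl, by rw [show ((az, az) : HVert n).2 = az from rfl, sF_az]; exact Finset.empty_subset D⟩
      | tail _ hadj ih =>
        rename_i b c _
        have hadj' : (HCN n).Adj (b : HVert n) (c : HVert n) := hadj
        exact Q_closed hn hDn ih.1 ih.2 hadj' c.2
    have := (hinv _ hreach).1
    exact az_ne_ab hn ((show ((ab, az) : HVert n).1 = ab from rfl) ▸ this).symm
  · -- degree condition
    intro v hv
    rw [Finset.mem_coe, mem_FS] at hv
    push_neg at hv
    obtain ⟨hvA, hvB, hvC⟩ := hv
    by_cases hv1 : v.1 = az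
    · -- v in the az cluster
      set F := D.image (fun a => ((v.1, flipb a v.2) : HVert n)) with hF
      have hFcard : F.card = g := by
        rw [hF, Finset.card_image_of_injOn, hD]
        intro a _ b _ heq
        simp only [Prod.mk.injEq] at heq
        exact flipb_inj_idx heq.2
      have hFsub : ∀ x ∈ F, x ∈ ((HCN n).neighborSet v) \ ↑(FS n D) := by
        intro x hx
        rw [hF, Finset.mem_image] at hx
        obtain ⟨a, haD, rfl⟩ := hx
        constructor
        · exact adj_flipb hn v a
        · intro hcon
          rw [Finset.mem_coe, mem_FS] at hcon
          rcases hcon with ⟨_, h2⟩ | ⟨_, h2, _⟩ | h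
          · rw [show ((v.1, flipb a v.2) : HVert n).2 = flipb a v.2 from rfl, sF_flipb,
              symmDiff_sdiff_of_mem' haD] at h2
            by_cases hvD : sF v.2 ⊆ D
            · rw [Finset.sdiff_eq_empty_iff_subset.mpr hvD] at h2
              simp at h2
            · apply hvA hv1
              exact h2
          · exact h2 hv1
          · have := congrArg Prod.fst h
            simp only at this
            exact az_ne_ab hn (hv1 ▸ this)
      calc g = F.card := hFcard.symm
      _ ≤ _ := le_ncard_of_finset F _ hFsub
    · -- v in another cluster
      set bad := Finset.univ.filter (fun a => ((v.1, flipb a v.2) : HVert n) ∈ FS n D) with hbad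
      have hbad1 : bad.card ≤ 1 := by
        rw [Finset.card_le_one]
        intro a ha b hb
        rw [hbad, Finset.mem_filter, mem_FS] at ha hb
        have hget : ∀ c : Fin n, ((v.1, flipb c v.2) : HVert n) ∈ FS n D →
            flipb c v.2 = az ∨ (v.1 = ab ∧ flipb c v.2 = ab) := by
          intro c hc
          rw [mem_FS] at hc
          rcases hc with ⟨h1, _⟩ | ⟨_, _, h3⟩ | h
          · exact absurd h1 hv1
          · exact Or.inl h3
          · exact Or.inr ⟨congrArg Prod.fst h, congrArg Prod.snd h⟩
        have ha' := hget a (by rw [mem_FS]; exact ha.2)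
        have hb' := hget b (by rw [mem_FS]; exact hb.2)
        -- the two cases for v.1 cannot mix: if v.1 = ab then sF v.1 = univ ⊄ D
        have hnomix : ¬ (v.1 = ab ∧ (∃ c : Fin n, flipb c v.2 = az ∧
            ((v.1, flipb c v.2) : HVert n) ∈ FS n D)) := by
          rintro ⟨hab, c, hc, hcFS⟩
          rw [mem_FS] at hcFS
          rcases hcFS with ⟨h1, _⟩ | ⟨h1, _, _⟩ | h
          · exact hv1 h1
          · rw [hab, sF_ab] at h1
            have := Finset.card_le_card h1
            rw [Finset.card_univ, Fintype.card_fin, hD] at this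
            omega
          · have h2 := congrArg Prod.snd h
            simp only at h2
            exact az_ne_ab hn (hc ▸ h2)
        rcases ha' with ha' | ⟨hab, ha'⟩ <;> rcases hb' with hb' | ⟨_, hb'⟩
        · exact flipb_inj_idx (ha'.trans hb'.symm)
        · exfalso
          rename_i hab2
          exact hnomix ⟨hab2, a, ha', by rw [mem_FS]; exact ha.2⟩
        · exact absurd ⟨hab, b, hb', by rw [mem_FS]; exact hb.2⟩ hnomix
        · exact flipb_inj_idx (ha'.trans hb'.symm)
      set F := (Finset.univ \ bad).image (fun a => ((v.1, flipb a v.2) : HVert n)) with hF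
      have hFcard : g ≤ F.card := by
        rw [hF, Finset.card_image_of_injOn (by
          intro a _ b _ heq
          simp only [Prod.mk.injEq] at heq
          exact flipb_inj_idx heq.2)]
        rw [Finset.card_sdiff_of_subset (Finset.subset_univ bad), Finset.card_univ, Fintype.card_fin]
        omega
      have hFsub : ∀ x ∈ F, x ∈ ((HCN n).neighborSet v) \ ↑(FS n D) := by
        intro x hx
        rw [hF, Finset.mem_image] at hx
        obtain ⟨a, haD, rfl⟩ := hx
        rw [Finset.mem_sdiff, hbad, Finset.mem_filter] at haD
        refine ⟨adj_flipb hn v a, ?_⟩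
        intro hcon
        exact haD.2 ⟨Finset.mem_univ a, Finset.mem_coe.mp hcon⟩
      calc g ≤ F.card := hFcard
      _ ≤ _ := le_ncard_of_finset F _ hFsub

end ExistenceMain

section LowerBound
open scoped Classical

variable {g : ℕ}

lemma arith_f_le (hn : 1 ≤ n) (hg : g ≤ n - 1) : 2 ^ g * (n + 1 - g) ≤ 2 ^ n := by
  have hk : 1 ≤ n - g := by omega
  have h1 : n + 1 - g ≤ 2 ^ (n - g) := by
    have := Nat.lt_two_pow_self (n := n - g)
    omega
  calc 2 ^ g * (n + 1 - g) ≤ 2 ^ g * 2 ^ (n - g) := Nat.mul_le_mul_left _ h1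
  _ = 2 ^ n := by rw [← pow_add]; congr 1; omega

lemma arith_half (hn : 1 ≤ n) (hg : g ≤ n - 1) :
    2 ^ g * (n + 1 - g) ≤ 2 * (2 ^ (g - 1) * (n - (g - 1))) := by
  rcases Nat.eq_zero_or_pos g with rfl | hgpos
  · simp only [pow_zero, one_mul, Nat.zero_sub, Nat.sub_zero]
    omega
  · obtain ⟨g', rfl⟩ : ∃ g', g = g' + 1 := ⟨g - 1, by omega⟩
    simp only [Nat.add_sub_cancel]
    rw [pow_succ]
    have : n - g' = n + 1 - (g' + 1) := by omega
    rw [this]; ring_nf; omega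

lemma arith_half' (hn2 : 2 ≤ n) (hg : g ≤ n - 1) :
    2 ^ g * (n + 1 - g) ≤ 2 ^ (g - 1) * (n - (g - 1)) + (2 ^ n - 2) := by
  rcases Nat.eq_zero_or_pos g with rfl | hgpos
  · simp only [pow_zero, one_mul, Nat.zero_sub, Nat.sub_zero]
    have : 4 ≤ 2 ^ n := by
      calc (4:ℕ) = 2 ^ 2 := by norm_num
      _ ≤ 2 ^ n := Nat.pow_le_pow_right (by norm_num) hn2
    omega
  · obtain ⟨g', rfl⟩ : ∃ g', g = g' + 1 := ⟨g - 1, by omega⟩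
    simp only [Nat.add_sub_cancel]
    have he : n - g' = n + 1 - (g' + 1) := by omega
    rw [he]
    have key : 2 ^ g' * (n + 1 - (g' + 1)) ≤ 2 ^ n - 2 := by
      have h1 : n + 1 - (g' + 1) ≤ 2 ^ (n - (g' + 1)) := by
        have := Nat.lt_two_pow_self (n := n - (g' + 1))
        omega
      have h2 : 2 ^ g' * (n + 1 - (g' + 1)) ≤ 2 ^ (n - 1) := by
        calc 2 ^ g' * (n + 1 - (g' + 1)) ≤ 2 ^ g' * 2 ^ (n - (g' + 1)) :=
              Nat.mul_le_mul_left _ h1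
        _ = 2 ^ (g' + (n - (g' + 1))) := (pow_add 2 _ _).symm
        _ ≤ 2 ^ (n - 1) := Nat.pow_le_pow_right (by norm_num) (by omega)
      have h3 : 2 ^ (n - 1) + 2 ≤ 2 ^ n := by
        have e : 2 ^ n = 2 ^ (n - 1) + 2 ^ (n - 1) := by
          rw [← two_mul, ← pow_succ']
          congr 1; omega
        have : 2 ≤ 2 ^ (n - 1) := by
          calc (2:ℕ) = 2 ^ 1 := by norm_num
          _ ≤ 2 ^ (n - 1) := Nat.pow_le_pow_right (by norm_num) (by omega)
        omega
      omega
    have hsum : 2 ^ (g' + 1) * (n + 1 - (g' + 1)) =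
        2 ^ g' * (n + 1 - (g' + 1)) + 2 ^ g' * (n + 1 - (g' + 1)) := by
      rw [pow_succ]; ring
    omega

lemma arith_quad {t m : ℕ} (h1 : 1 ≤ t) (h2 : t + 2 ≤ m) : m - 2 ≤ t * (m - t - 1) := by
  obtain ⟨t', rfl⟩ : ∃ t', t = t' + 1 := ⟨t - 1, by omega⟩
  have hu : 1 ≤ m - t' - 1 - 1 + 1 := by omega
  calc m - 2 = (m - t' - 1 - 1) + t' := by omega
  _ ≤ (m - t' - 1 - 1) + t' * (m - (t' + 1) - 1) + (t' * 1 - t' * 1) := by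
      have : t' * 1 ≤ t' * (m - (t' + 1) - 1) := Nat.mul_le_mul_left _ (by omega)
      omega
  _ ≤ (t' + 1) * (m - (t' + 1) - 1) := by
      have e : (t' + 1) * (m - (t' + 1) - 1) = t' * (m - (t' + 1) - 1) + (m - (t' + 1) - 1) := by
        ring
      have : t' * 1 ≤ t' * (m - (t' + 1) - 1) := Nat.mul_le_mul_left _ (by omega)
      omega

lemma arith_quad2 {t m : ℕ} (h1 : 2 ≤ t) (h2 : t + 2 ≤ m) : 2 * (m - 2) ≤ t * (m - t) := by
  obtain ⟨t', rfl⟩ : ∃ t', t = t' + 2 := ⟨t - 2, by omega⟩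
  have e : (t' + 2) * (m - (t' + 2)) = t' * (m - (t' + 2)) + 2 * (m - (t' + 2)) := by ring
  have h3 : t' * 2 ≤ t' * (m - (t' + 2)) := Nat.mul_le_mul_left _ (by omega)
  omega

/-- total cardinality of a vertex finset as a sum over clusters. -/
lemma sum_fiber_card (C : Finset (Fin n → Bool)) (T : Finset (HVert n)) :
    (T.filter (fun v => v.1 ∈ C)).card =
      ∑ x ∈ C, (Finset.univ.filter (fun y => ((x, y) : HVert n) ∈ T)).card := by
  rw [Finset.card_eq_sum_card_fiberwise
    (f := Prod.fst) (s := T.filter (fun v => v.1 ∈ C)) (t := C) (fun v hv => (Finset.mem_filter.mp hv).2)]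
  apply Finset.sum_congr rfl
  intro x hx
  apply Finset.card_bij (fun v _ => v.2)
  · intro v hv
    rw [Finset.mem_filter, Finset.mem_filter] at hv
    rw [Finset.mem_filter]
    obtain ⟨⟨hvT, _⟩, hvx⟩ := hv
    refine ⟨Finset.mem_univ _, ?_⟩
    rw [show ((x, v.2) : HVert n) = v from Prod.ext hvx.symm rfl]
    exact hvT
  · intro v hv w hw hvw
    rw [Finset.mem_filter] at hv hw
    exact Prod.ext (hv.2.trans hw.2.symm) hvw
  · intro y hy
    rw [Finset.mem_filter] at hy
    exact ⟨(x, y), Finset.mem_filter.mpr ⟨Finset.mem_filter.mpr ⟨hy.2, hx⟩, rfl⟩, rfl⟩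

lemma sum_fiber_card_univ (T : Finset (HVert n)) :
    T.card = ∑ x : Fin n → Bool, (Finset.univ.filter (fun y => ((x, y) : HVert n) ∈ T)).card := by
  have := sum_fiber_card Finset.univ T
  simpa using this

lemma flips_count (hn : 1 ≤ n) (S : Set (HVert n)) {z : HVert n}
    (hdz : g ≤ (((HCN n).neighborSet z) \ S).ncard) :
    g ≤ (Finset.univ.filter (fun a => ((z.1, flipb a z.2) : HVert n) ∉ S)).card + 1 := by
  set Fl := Finset.univ.filter (fun a => ((z.1, flipb a z.2) : HVert n) ∉ S) with hFl
  set Fim := Fl.image (fun a => ((z.1, flipb a z.2) : HVert n)) with hFim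
  have hsub : ((HCN n).neighborSet z) \ S ⊆ ↑(Fim ∪ {ptr z}) := by
    intro w hw
    obtain ⟨hadj, hwS⟩ := hw
    rw [Finset.coe_union, Set.mem_union]
    rcases nbr_cases hn hadj with rfl | ⟨a, rfl⟩
    · right; simp
    · left
      rw [Finset.mem_coe, hFim, Finset.mem_image]
      exact ⟨a, Finset.mem_filter.mpr ⟨Finset.mem_univ _, hwS⟩, rfl⟩
  calc g ≤ (((HCN n).neighborSet z) \ S).ncard := hdz
  _ ≤ ((Fim ∪ {ptr z} : Finset (HVert n)) : Set (HVert n)).ncard :=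
      Set.ncard_le_ncard hsub (Set.toFinite _)
  _ = (Fim ∪ {ptr z}).card := Set.ncard_coe_finset _
  _ ≤ Fim.card + 1 := by
      have := Finset.card_union_le Fim ({ptr z} : Finset (HVert n))
      simpa using this
  _ ≤ Fl.card + 1 := by
      have h : Fim.card ≤ Fl.card := by rw [hFim]; exact Finset.card_image_le
      omega

lemma flips_count' (hn : 1 ≤ n) (S : Set (HVert n)) {z : HVert n}
    (hdz : g ≤ (((HCN n).neighborSet z) \ S).ncard)
    (hptr : ptr z ∉ ((HCN n).neighborSet z) \ S) :
    g ≤ (Finset.univ.filter (fun a => ((z.1, flipb a z.2) : HVert n) ∉ S)).card := by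
  set Fl := Finset.univ.filter (fun a => ((z.1, flipb a z.2) : HVert n) ∉ S) with hFl
  set Fim := Fl.image (fun a => ((z.1, flipb a z.2) : HVert n)) with hFim
  have hsub : ((HCN n).neighborSet z) \ S ⊆ ↑Fim := by
    intro w hw
    obtain ⟨hadj, hwS⟩ := hw
    rcases nbr_cases hn hadj with rfl | ⟨a, rfl⟩
    · exact absurd ⟨hadj, hwS⟩ hptr
    · rw [Finset.mem_coe, hFim, Finset.mem_image]
      exact ⟨a, Finset.mem_filter.mpr ⟨Finset.mem_univ _, hwS⟩, rfl⟩
  calc g ≤ (((HCN n).neighborSet z) \ S).ncard := hdz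
  _ ≤ ((Fim : Finset (HVert n)) : Set (HVert n)).ncard :=
      Set.ncard_le_ncard hsub (Set.toFinite _)
  _ = Fim.card := Set.ncard_coe_finset _
  _ ≤ Fl.card := by rw [hFim]; exact Finset.card_image_le

end LowerBound

section LowerBound2
open scoped Classical
open RgCube

variable {g : ℕ}

variable (n) in
noncomputable def cfib (X : Set (HVert n)) (x : Fin n → Bool) : Finset (Fin n → Bool) :=
  Finset.univ.filter (fun y => ((x, y) : HVert n) ∈ X)

variable (n) in
noncomputable def cfin (X : Set (HVert n)) (x : Fin n → Bool) : Finset (Finset (Fin n)) :=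
  (cfib n X x).image sF

lemma mem_cfib {X : Set (HVert n)} {x y : Fin n → Bool} :
    y ∈ cfib n X x ↔ ((x, y) : HVert n) ∈ X := by
  simp [cfib]

lemma mem_cfin {X : Set (HVert n)} {x : Fin n → Bool} {t : Finset (Fin n)} :
    t ∈ cfin n X x ↔ ∃ y, ((x, y) : HVert n) ∈ X ∧ sF y = t := by
  simp [cfin, cfib]

lemma cfin_card (X : Set (HVert n)) (x : Fin n → Bool) :
    (cfin n X x).card = (cfib n X x).card := by
  rw [cfin]
  exact Finset.card_image_of_injOn (fun a _ b _ h => sF_inj h)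

lemma gd_cluster (hn : 1 ≤ n) (S X : Set (HVert n))
    (hcl : ∀ z ∈ X, ∀ w, (HCN n).Adj z w → w ∉ S → w ∈ X)
    (hXS : ∀ z ∈ X, z ∉ S)
    (hdeg : ∀ v ∉ S, g ≤ (((HCN n).neighborSet v) \ S).ncard)
    (x : Fin n → Bool) : gd Finset.univ (g - 1) (cfin n X x) := by
  intro s hs
  rw [mem_cfin] at hs
  obtain ⟨y, hyX, rfl⟩ := hs
  have hz : ((x, y) : HVert n) ∉ S := hXS _ hyX
  have hcount := flips_count hn S (hdeg _ hz)
  have hsub : (Finset.univ.filter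
      (fun a => (((x, y).1, flipb a ((x, y) : HVert n).2) : HVert n) ∉ S)) ⊆
      Finset.univ.filter (fun a => sF y ∆ {a} ∈ cfin n X x) := by
    intro a ha
    rw [Finset.mem_filter] at ha ⊢
    refine ⟨Finset.mem_univ _, ?_⟩
    rw [mem_cfin]
    refine ⟨flipb a y, ?_, (sF_flipb a y).symm ▸ rfl⟩
    exact hcl _ hyX _ (adj_flipb hn (x, y) a) ha.2
  have := Finset.card_le_card hsub
  omega

lemma gd_cluster_full (hn : 1 ≤ n) (S X : Set (HVert n))
    (hcl : ∀ z ∈ X, ∀ w, (HCN n).Adj z w → w ∉ S → w ∈ X)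
    (hXS : ∀ z ∈ X, z ∉ S)
    (hdeg : ∀ v ∉ S, g ≤ (((HCN n).neighborSet v) \ S).ncard)
    (x : Fin n → Bool)
    (hptr : ∀ y : Fin n → Bool, ((x, y) : HVert n) ∈ X → ptr ((x, y) : HVert n) ∉ X) :
    gd Finset.univ g (cfin n X x) := by
  intro s hs
  rw [mem_cfin] at hs
  obtain ⟨y, hyX, rfl⟩ := hs
  have hz : ((x, y) : HVert n) ∉ S := hXS _ hyX
  have hptr' : ptr ((x, y) : HVert n) ∉ ((HCN n).neighborSet ((x, y) : HVert n)) \ S := by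
    rintro ⟨hadj, hS⟩
    exact hptr y hyX (hcl _ hyX _ hadj hS)
  have hcount := flips_count' hn S (hdeg _ hz) hptr'
  have hsub : (Finset.univ.filter
      (fun a => (((x, y).1, flipb a ((x, y) : HVert n).2) : HVert n) ∉ S)) ⊆
      Finset.univ.filter (fun a => sF y ∆ {a} ∈ cfin n X x) := by
    intro a ha
    rw [Finset.mem_filter] at ha ⊢
    refine ⟨Finset.mem_univ _, ?_⟩
    rw [mem_cfin]
    refine ⟨flipb a y, ?_, (sF_flipb a y).symm ▸ rfl⟩
    exact hcl _ hyX _ (adj_flipb hn (x, y) a) ha.2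
  have := Finset.card_le_card hsub
  omega

lemma cfin_nonadj (hn : 1 ≤ n) {X Y : Set (HVert n)}
    (hXY : ∀ z ∈ X, ∀ w ∈ Y, ¬ (HCN n).Adj z w) (x : Fin n → Bool) :
    ∀ s ∈ cfin n X x, ∀ a : Fin n, s ∆ {a} ∉ cfin n Y x := by
  intro s hs a hcon
  rw [mem_cfin] at hs hcon
  obtain ⟨y, hyX, rfl⟩ := hs
  obtain ⟨y', hy'Y, hy'⟩ := hcon
  have : y' = flipb a y := sF_inj (by rw [hy', sF_flipb])
  subst this
  exact hXY _ hyX _ hy'Y (adj_flipb hn (x, y) a)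

lemma cfin_disj {X Y : Set (HVert n)} (hXY : ∀ z ∈ X, z ∉ Y) (x : Fin n → Bool) :
    Disjoint (cfin n X x) (cfin n Y x) := by
  rw [Finset.disjoint_left]
  intro t ht1 ht2
  rw [mem_cfin] at ht1 ht2
  obtain ⟨y, hyX, rfl⟩ := ht1
  obtain ⟨y', hy'Y, hy'⟩ := ht2
  have : y' = y := sF_inj hy'
  subst this
  exact hXY _ hyX hy'Y

lemma cluster_partition (S B W : Set (HVert n)) (hBS : ∀ z ∈ B, z ∉ S)
    (hW : ∀ z : HVert n, z ∈ W ↔ (z ∉ S ∧ z ∉ B)) (x : Fin n → Bool) :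
    (cfib n B x).card + (cfib n W x).card + (cfib n S x).card = 2 ^ n := by
  classical
  have h1 : (cfib n B x) ∪ (cfib n W x) ∪ (cfib n S x) = Finset.univ := by
    ext y
    simp only [Finset.mem_union, mem_cfib, Finset.mem_univ, iff_true]
    by_cases hS : ((x, y) : HVert n) ∈ S
    · exact Or.inr hS
    · by_cases hB : ((x, y) : HVert n) ∈ B
      · exact Or.inl (Or.inl hB)
      · exact Or.inl (Or.inr ((hW _).mpr ⟨hS, hB⟩))
  have hd1 : Disjoint (cfib n B x) (cfib n W x) := by
    rw [Finset.disjoint_left]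
    intro y hy1 hy2
    rw [mem_cfib] at hy1 hy2
    exact ((hW _).mp hy2).2 hy1
  have hd2 : Disjoint ((cfib n B x) ∪ (cfib n W x)) (cfib n S x) := by
    rw [Finset.disjoint_left]
    intro y hy1 hy2
    rw [Finset.mem_union, mem_cfib, mem_cfib] at hy1
    rw [mem_cfib] at hy2
    rcases hy1 with hy1 | hy1
    · exact hBS _ hy1 hy2
    · exact ((hW _).mp hy1).1 hy2
  have := congrArg Finset.card h1
  rw [Finset.card_union_of_disjoint hd2, Finset.card_union_of_disjoint hd1,
    Finset.card_univ] at this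
  rw [this]
  simp

end LowerBound2

section LowerBound3
open scoped Classical
open RgCube

variable {g : ℕ}

lemma univ_card_fin (n : ℕ) : (Finset.univ : Finset (Fin n)).card = n := by simp

lemma mixed_bound (hn : 1 ≤ n) (S B W : Set (HVert n))
    (hclB : ∀ z ∈ B, ∀ w, (HCN n).Adj z w → w ∉ S → w ∈ B)
    (hclW : ∀ z ∈ W, ∀ w, (HCN n).Adj z w → w ∉ S → w ∈ W)
    (hBS : ∀ z ∈ B, z ∉ S) (hWS : ∀ z ∈ W, z ∉ S)
    (hBW : ∀ z ∈ B, z ∉ W)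
    (hnonadj : ∀ z ∈ B, ∀ w ∈ W, ¬ (HCN n).Adj z w)
    (hdeg : ∀ v ∉ S, g ≤ (((HCN n).neighborSet v) \ S).ncard)
    (hWchar : ∀ z : HVert n, z ∈ W ↔ (z ∉ S ∧ z ∉ B))
    (x : Fin n → Bool)
    (hBx : (cfib n B x).Nonempty) (hWx : (cfib n W x).Nonempty) :
    2 ^ (g - 1) * (n - (g - 1)) ≤ (cfib n S x).card := by
  have hL4 := L4 (N := n) (Finset.univ : Finset (Fin n)) (g - 1)
    (cfin n B x) (cfin n W x) (le_of_eq (univ_card_fin n))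
    (gd_cluster hn S B hclB hBS hdeg x)
    (gd_cluster hn S W hclW hWS hdeg x)
    (hBx.image sF) (hWx.image sF)
    (fun s _ => Finset.subset_univ s) (fun t _ => Finset.subset_univ t)
    (cfin_disj hBW x)
    (cfin_nonadj hn hnonadj x)
  rw [univ_card_fin] at hL4
  have hpart := cluster_partition S B W hBS hWchar x
  have e1 := cfin_card B x
  have e2 := cfin_card W x
  omega

lemma single_cluster (hn : 1 ≤ n) (hg : g ≤ n - 1) (S X : Set (HVert n))
    (hcl : ∀ z ∈ X, ∀ w, (HCN n).Adj z w → w ∉ S → w ∈ X)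
    (hXS : ∀ z ∈ X, z ∉ S)
    (hdeg : ∀ v ∉ S, g ≤ (((HCN n).neighborSet v) \ S).ncard)
    (hne : X.Nonempty)
    (hsingle : ∀ z ∈ X, ∀ z' ∈ X, z.1 = z'.1) :
    2 ^ g * (n + 1 - g) ≤ S.ncard := by
  obtain ⟨z0, hz0⟩ := hne
  set x0 := z0.1 with hx0
  have hXx : ∀ z ∈ X, z.1 = x0 := fun z hz => hsingle z hz z0 hz0
  have hptr : ∀ y : Fin n → Bool, ((x0, y) : HVert n) ∈ X → ptr ((x0, y) : HVert n) ∉ X := by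
    intro y hy hcon
    have h1 := hXx _ hcon
    exact ptr_fst_ne hn ((x0, y) : HVert n) h1
  have hgd := gd_cluster_full hn S X hcl hXS hdeg x0 hptr
  have hcfne : (cfin n X x0).Nonempty := by
    refine ⟨sF z0.2, ?_⟩
    rw [mem_cfin]
    exact ⟨z0.2, by rw [show ((x0, z0.2) : HVert n) = z0 from Prod.ext rfl rfl]; exact hz0, rfl⟩
  have hL3 := L3 (N := n) (Finset.univ : Finset (Fin n)) g (cfin n X x0)
    (le_of_eq (univ_card_fin n)) hgd hcfne
  rw [univ_card_fin] at hL3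
  -- the closed neighbourhood injects into  X-fiber ∪ S-fiber
  have hclsub : cl Finset.univ (cfin n X x0) ⊆ cfin n X x0 ∪ cfin n S x0 := by
    intro t ht
    rw [mem_cl] at ht
    rw [Finset.mem_union]
    rcases ht with ht | ⟨s, hs, a, _, rfl⟩
    · exact Or.inl ht
    · rw [mem_cfin] at hs
      obtain ⟨y, hyX, rfl⟩ := hs
      by_cases hS : ((x0, flipb a y) : HVert n) ∈ S
      · right
        rw [mem_cfin]
        exact ⟨flipb a y, hS, sF_flipb a y⟩
      · left
        rw [mem_cfin]
        exact ⟨flipb a y, hcl _ hyX _ (adj_flipb hn (x0, y) a) hS, sF_flipb a y⟩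
  have hclcard : (cl Finset.univ (cfin n X x0)).card ≤ (cfin n X x0).card + (cfin n S x0).card :=
    le_trans (Finset.card_le_card hclsub) (Finset.card_union_le _ _)
  -- S contains the S-fiber of x0 plus the partners of X
  set P0 := (cfib n S x0).image (fun y => ((x0, y) : HVert n)) with hP0
  set P1 := (cfib n X x0).image (fun y => ptr ((x0, y) : HVert n)) with hP1
  have hP0card : P0.card = (cfib n S x0).card := by
    rw [hP0]
    apply Finset.card_image_of_injOn
    intro a _ b _ hab
    exact congrArg Prod.snd hab
  have hP1card : P1.card = (cfib n X x0).card := by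
    rw [hP1]
    apply Finset.card_image_of_injOn
    intro a _ b _ hab
    have := ptr_inj hn hab
    exact congrArg Prod.snd this
  have hP0sub : ∀ v ∈ P0, v ∈ S := by
    intro v hv
    rw [hP0, Finset.mem_image] at hv
    obtain ⟨y, hy, rfl⟩ := hv
    exact mem_cfib.mp hy
  have hP1sub : ∀ v ∈ P1, v ∈ S := by
    intro v hv
    rw [hP1, Finset.mem_image] at hv
    obtain ⟨y, hy, rfl⟩ := hv
    rw [mem_cfib] at hy
    by_contra hS
    exact hptr y hy (hcl _ hy _ (adj_ptr hn _) hS)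
  have hdisj : Disjoint P0 P1 := by
    rw [Finset.disjoint_left]
    intro v hv0 hv1
    rw [hP0, Finset.mem_image] at hv0
    rw [hP1, Finset.mem_image] at hv1
    obtain ⟨y, _, rfl⟩ := hv0
    obtain ⟨y', _, hy'⟩ := hv1
    have h5 : (ptr ((x0, y') : HVert n)).1 = ((x0, y) : HVert n).1 := congrArg Prod.fst hy'
    exact ptr_fst_ne hn ((x0, y') : HVert n) h5
  have hScard : (cfib n S x0).card + (cfib n X x0).card ≤ S.ncard := by
    have hsub : P0 ∪ P1 ⊆ S.toFinset := by
      intro v hv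
      rw [Finset.mem_union] at hv
      rw [Set.mem_toFinset]
      rcases hv with hv | hv
      · exact hP0sub v hv
      · exact hP1sub v hv
    calc (cfib n S x0).card + (cfib n X x0).card = (P0 ∪ P1).card := by
          rw [Finset.card_union_of_disjoint hdisj, hP0card, hP1card]
    _ ≤ S.toFinset.card := Finset.card_le_card hsub
    _ = S.ncard := by rw [Set.ncard_eq_toFinset_card']
  have e1 := cfin_card X x0
  have e2 := cfin_card S x0
  omega

end LowerBound3

section LowerBoundMain
open scoped Classical
open RgCube

variable {g : ℕ}

lemma n_ge_two_of_pow {n : ℕ} (h : 3 ≤ 2 ^ n) : 2 ≤ n := by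
  by_contra hc
  push_neg at hc
  interval_cases n <;> norm_num at h

lemma lower_bound (hn : 1 ≤ n) (hg : g ≤ n - 1) (S : Set (HVert n))
    (h : IsRgCut n g S) : 2 ^ g * (n + 1 - g) ≤ S.ncard := by
  classical
  obtain ⟨hcut, hdeg⟩ := h
  have hfle := arith_f_le (g := g) hn hg
  by_cases hSc : ∀ v : HVert n, v ∈ S
  · have hSu : S = Set.univ := Set.eq_univ_of_forall hSc
    rw [hSu, Set.ncard_univ]
    have hcard : Nat.card (HVert n) = 2 ^ n * 2 ^ n := by
      rw [Nat.card_eq_fintype_card]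
      show Fintype.card ((Fin n → Bool) × (Fin n → Bool)) = _
      rw [Fintype.card_prod]
      simp
    rw [hcard]
    calc 2 ^ g * (n + 1 - g) ≤ 2 ^ n := hfle
    _ ≤ 2 ^ n * 2 ^ n := Nat.le_mul_of_pos_left _ (Nat.two_pow_pos n)
  push_neg at hSc
  obtain ⟨u0, hu0⟩ := hSc
  have hu0c : u0 ∈ Sᶜ := hu0
  set Bset : Set (HVert n) :=
    {z | ∃ hz : z ∈ Sᶜ, ((HCN n).induce Sᶜ).Reachable ⟨u0, hu0c⟩ ⟨z, hz⟩} with hBdef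
  set Wset : Set (HVert n) := {z | z ∉ S ∧ z ∉ Bset} with hWdef
  have hBS : ∀ z ∈ Bset, z ∉ S := by
    rintro z ⟨hz, -⟩
    exact hz
  have hWchar : ∀ z : HVert n, z ∈ Wset ↔ (z ∉ S ∧ z ∉ Bset) := fun z => Iff.rfl
  have hWS : ∀ z ∈ Wset, z ∉ S := fun z hz => hz.1
  have hBW : ∀ z ∈ Bset, z ∉ Wset := fun z hz hzw => hzw.2 hz
  have hu0B : u0 ∈ Bset := ⟨hu0c, SimpleGraph.Reachable.refl _⟩
  have hclB : ∀ z ∈ Bset, ∀ w, (HCN n).Adj z w → w ∉ S → w ∈ Bset := by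
    rintro z ⟨hz, hr⟩ w hadj hw
    refine ⟨hw, hr.trans (SimpleGraph.Adj.reachable ?_)⟩
    exact hadj
  have hclW : ∀ z ∈ Wset, ∀ w, (HCN n).Adj z w → w ∉ S → w ∈ Wset := by
    rintro z ⟨hzS, hzB⟩ w hadj hw
    exact ⟨hw, fun hwB => hzB (hclB w hwB z hadj.symm hzS)⟩
  have hnonadj : ∀ z ∈ Bset, ∀ w ∈ Wset, ¬ (HCN n).Adj z w :=
    fun z hz w hw hadj => hw.2 (hclB z hz w hadj hw.1)
  have hWne : Wset.Nonempty := by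
    by_contra hcon
    apply hcut
    rw [Set.not_nonempty_iff_eq_empty] at hcon
    have hall : ∀ z (hz : z ∈ Sᶜ), ((HCN n).induce Sᶜ).Reachable ⟨u0, hu0c⟩ ⟨z, hz⟩ := by
      intro z hz
      by_contra hnr
      have hzB : z ∉ Bset := by
        rintro ⟨hz', hr⟩
        exact hnr hr
      have : z ∈ Wset := ⟨hz, hzB⟩
      rw [hcon] at this
      exact this
    have hne : Nonempty ↥(Sᶜ : Set (HVert n)) := ⟨⟨u0, hu0c⟩⟩
    exact { preconnected := fun x y => ((hall x.1 x.2).symm.trans (hall y.1 y.2)) }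
  -- sum over clusters
  have hsum : S.ncard = ∑ x : Fin n → Bool, (cfib n S x).card := by
    rw [Set.ncard_eq_toFinset_card', sum_fiber_card_univ S.toFinset]
    apply Finset.sum_congr rfl
    intro x _
    apply Finset.card_bij (fun y _ => y)
    · intro y hy
      rw [Finset.mem_filter, Set.mem_toFinset] at hy
      exact mem_cfib.mpr hy.2
    · intro a _ b _ hab; exact hab
    · intro y hy
      refine ⟨y, ?_, rfl⟩
      rw [Finset.mem_filter, Set.mem_toFinset]
      exact ⟨Finset.mem_univ _, mem_cfib.mp hy⟩
  by_cases hBsingle : ∀ z ∈ Bset, ∀ z' ∈ Bset, z.1 = z'.1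
  · exact single_cluster hn hg S Bset hclB hBS hdeg ⟨u0, hu0B⟩ hBsingle
  by_cases hWsingle : ∀ z ∈ Wset, ∀ z' ∈ Wset, z.1 = z'.1
  · exact single_cluster hn hg S Wset hclW hWS hdeg hWne hWsingle
  push_neg at hBsingle hWsingle
  obtain ⟨zb, hzb, zb', hzb', hzbne⟩ := hBsingle
  obtain ⟨zw, hzw, zw', hzw', hzwne⟩ := hWsingle
  set CB := Finset.univ.filter (fun x : Fin n → Bool => (cfib n Bset x).Nonempty) with hCB
  set CW := Finset.univ.filter (fun x : Fin n → Bool => (cfib n Wset x).Nonempty) with hCW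
  have hmemCB : ∀ z ∈ Bset, z.1 ∈ CB := by
    intro z hz
    rw [hCB, Finset.mem_filter]
    exact ⟨Finset.mem_univ _, ⟨z.2, mem_cfib.mpr (by simpa using hz)⟩⟩
  have hmemCW : ∀ z ∈ Wset, z.1 ∈ CW := by
    intro z hz
    rw [hCW, Finset.mem_filter]
    exact ⟨Finset.mem_univ _, ⟨z.2, mem_cfib.mpr (by simpa using hz)⟩⟩
  have hCBne : ∀ x ∈ CB, (cfib n Bset x).Nonempty := by
    intro x hx; rw [hCB, Finset.mem_filter] at hx; exact hx.2
  have hCWne : ∀ x ∈ CW, (cfib n Wset x).Nonempty := by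
    intro x hx; rw [hCW, Finset.mem_filter] at hx; exact hx.2
  have hmixed_bnd : ∀ x ∈ CB ∩ CW, 2 ^ (g - 1) * (n - (g - 1)) ≤ (cfib n S x).card := by
    intro x hx
    rw [Finset.mem_inter] at hx
    exact mixed_bound hn S Bset Wset hclB hclW hBS hWS hBW hnonadj hdeg hWchar x
      (hCBne x hx.1) (hCWne x hx.2)
  by_cases hmix2 : ∃ x1, x1 ∈ CB ∩ CW ∧ ∃ x2, x2 ∈ CB ∩ CW ∧ x1 ≠ x2
  · obtain ⟨x1, hx1, x2, hx2, hx12⟩ := hmix2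
    have hb1 := hmixed_bnd x1 hx1
    have hb2 := hmixed_bnd x2 hx2
    have hsum2 : (cfib n S x1).card + (cfib n S x2).card ≤
        ∑ x : Fin n → Bool, (cfib n S x).card := by
      calc (cfib n S x1).card + (cfib n S x2).card
          = ∑ x ∈ ({x1, x2} : Finset (Fin n → Bool)), (cfib n S x).card :=
            (Finset.sum_pair (f := fun x => (cfib n S x).card) hx12).symm
      _ ≤ _ := Finset.sum_le_sum_of_subset (Finset.subset_univ _)
    have harith := arith_half (g := g) hn hg
    omega
  by_cases hempty : ∃ e : Fin n → Bool, e ∉ CB ∧ e ∉ CW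
  · obtain ⟨e, he1, he2⟩ := hempty
    have hB0 : (cfib n Bset e).card = 0 := by
      rw [Finset.card_eq_zero, ← Finset.not_nonempty_iff_eq_empty]
      intro hne
      exact he1 (by rw [hCB, Finset.mem_filter]; exact ⟨Finset.mem_univ _, hne⟩)
    have hW0 : (cfib n Wset e).card = 0 := by
      rw [Finset.card_eq_zero, ← Finset.not_nonempty_iff_eq_empty]
      intro hne
      exact he2 (by rw [hCW, Finset.mem_filter]; exact ⟨Finset.mem_univ _, hne⟩)
    have hpart := cluster_partition S Bset Wset hBS hWchar e
    have hle : (cfib n S e).card ≤ ∑ x : Fin n → Bool, (cfib n S x).card :=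
      Finset.single_le_sum (f := fun x => (cfib n S x).card) (fun x _ => Nat.zero_le _)
        (Finset.mem_univ e)
    omega
  push_neg at hmix2 hempty
  set pureB := CB \ CW with hpB
  set pureW := CW \ CB with hpW
  have hBsub : ∀ x ∈ CB, x ∉ CW → x ∈ pureB := by
    intro x h1 h2; rw [hpB, Finset.mem_sdiff]; exact ⟨h1, h2⟩
  have hWsub : ∀ x ∈ CW, x ∉ CB → x ∈ pureW := by
    intro x h1 h2; rw [hpW, Finset.mem_sdiff]; exact ⟨h1, h2⟩
  -- the per-cluster inequality for pure B clusters
  have hpureWuniv : (Finset.univ.filter (fun v : Fin n → Bool => v ∈ pureW)).card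
      = pureW.card := by
    congr 1
    ext v
    simp
  have hkey : ∀ y ∈ pureB, pureW.card ≤ (cfib n S y).card +
      ((cfib n Bset y).filter (fun v => v ∈ pureW)).card := by
    intro y hy
    rw [hpB, Finset.mem_sdiff] at hy
    have hW0 : (cfib n Wset y).card = 0 := by
      rw [Finset.card_eq_zero, ← Finset.not_nonempty_iff_eq_empty]
      intro hne
      exact hy.2 (by rw [hCW, Finset.mem_filter]; exact ⟨Finset.mem_univ _, hne⟩)
    have hpart := cluster_partition S Bset Wset hBS hWchar y
    have hsplit : (cfib n Bset y).card =
        ((cfib n Bset y).filter (fun v => v ∈ pureW)).card +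
        ((cfib n Bset y).filter (fun v => ¬ v ∈ pureW)).card :=
      (Finset.card_filter_add_card_filter_not _).symm
    have hbnd : ((cfib n Bset y).filter (fun v => ¬ v ∈ pureW)).card ≤ 2 ^ n - pureW.card := by
      have hsub : (cfib n Bset y).filter (fun v => ¬ v ∈ pureW) ⊆
          Finset.univ.filter (fun v : Fin n → Bool => ¬ v ∈ pureW) := by
        intro v hv
        rw [Finset.mem_filter] at hv ⊢
        exact ⟨Finset.mem_univ _, hv.2⟩
      have hcompl := Finset.card_filter_add_card_filter_not
        (s := (Finset.univ : Finset (Fin n → Bool))) (p := fun v => v ∈ pureW)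
      have hu : (Finset.univ : Finset (Fin n → Bool)).card = 2 ^ n := by simp
      have := Finset.card_le_card hsub
      omega
    have hpWle : pureW.card ≤ 2 ^ n := by
      have : pureW ⊆ Finset.univ := Finset.subset_univ _
      have := Finset.card_le_card this
      simpa using this
    omega
  -- partner counting
  set PairsB := Finset.univ.filter
    (fun v : HVert n => v ∈ Bset ∧ v.1 ∈ pureB ∧ v.2 ∈ pureW) with hPairs
  have hstep1 : PairsB.card = ∑ y ∈ pureB, ((cfib n Bset y).filter (fun v => v ∈ pureW)).card := by
    have hfix : PairsB.filter (fun v => v.1 ∈ pureB) = PairsB := by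
      apply Finset.filter_true_of_mem
      intro v hv
      rw [hPairs, Finset.mem_filter] at hv
      exact hv.2.2.1
    rw [← hfix, sum_fiber_card pureB PairsB]
    apply Finset.sum_congr rfl
    intro y hy
    congr 1
    ext v
    simp only [Finset.mem_filter, mem_cfib, Finset.mem_univ, true_and]
    constructor
    · intro hmem
      rw [hPairs, Finset.mem_filter] at hmem
      exact ⟨hmem.2.1, hmem.2.2.2⟩
    · rintro ⟨h1, h2⟩
      rw [hPairs, Finset.mem_filter]
      exact ⟨Finset.mem_univ _, h1, hy, h2⟩
  have hdisjBW : Disjoint pureB pureW := by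
    rw [Finset.disjoint_left]
    intro x hx1 hx2
    rw [hpB, Finset.mem_sdiff] at hx1
    rw [hpW, Finset.mem_sdiff] at hx2
    exact hx1.2 hx2.1
  have hstep2 : PairsB.card ≤ ∑ z ∈ pureW, (cfib n S z).card := by
    have himg : (PairsB.image ptr).card = PairsB.card := by
      apply Finset.card_image_of_injOn
      intro a _ b _ hab
      exact ptr_inj hn hab
    have hsub : PairsB.image ptr ⊆ S.toFinset.filter (fun w => w.1 ∈ pureW) := by
      intro w hw
      rw [Finset.mem_image] at hw
      obtain ⟨v, hv, rfl⟩ := hw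
      rw [hPairs, Finset.mem_filter] at hv
      obtain ⟨-, hvB, hv1, hv2⟩ := hv
      have hne12 : v.1 ≠ v.2 := by
        intro heq
        exact Finset.disjoint_left.mp hdisjBW hv1 (heq ▸ hv2)
      have hptr : ptr v = (v.2, v.1) := by rw [ptr, if_neg hne12]
      have hptrS : ptr v ∈ S := by
        by_contra hS
        have : ptr v ∈ Bset := hclB v hvB _ (adj_ptr hn v) hS
        have h2 : (ptr v).1 ∈ CB := hmemCB _ this
        rw [hptr] at h2
        rw [hpW, Finset.mem_sdiff] at hv2
        exact hv2.2 h2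
      rw [Finset.mem_filter, Set.mem_toFinset]
      refine ⟨hptrS, ?_⟩
      rw [hptr]
      exact hv2
    have hcards : (S.toFinset.filter (fun w => w.1 ∈ pureW)).card =
        ∑ z ∈ pureW, (cfib n S z).card := by
      rw [sum_fiber_card pureW S.toFinset]
      apply Finset.sum_congr rfl
      intro z _
      congr 1
      ext v
      simp only [Finset.mem_filter, mem_cfib, Set.mem_toFinset, Finset.mem_univ, true_and]
    calc PairsB.card = (PairsB.image ptr).card := himg.symm
    _ ≤ (S.toFinset.filter (fun w => w.1 ∈ pureW)).card := Finset.card_le_card hsub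
    _ = _ := hcards
  have hkeysum : pureB.card * pureW.card ≤
      (∑ y ∈ pureB, (cfib n S y).card) + ∑ y ∈ pureB, ((cfib n Bset y).filter
        (fun v => v ∈ pureW)).card := by
    rw [← Finset.sum_add_distrib]
    calc pureB.card * pureW.card = ∑ _y ∈ pureB, pureW.card := by
          rw [Finset.sum_const, smul_eq_mul]
    _ ≤ _ := Finset.sum_le_sum hkey
  have hmain : pureB.card * pureW.card ≤
      (∑ y ∈ pureB, (cfib n S y).card) + ∑ z ∈ pureW, (cfib n S z).card := by
    omega
  -- nonemptiness of the pure parts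
  have hpureBne : pureB.Nonempty := by
    by_cases h1 : zb.1 ∈ CW
    · by_cases h2 : zb'.1 ∈ CW
      · exfalso
        apply hzbne
        exact hmix2 zb.1 (Finset.mem_inter.mpr ⟨hmemCB _ hzb, h1⟩) zb'.1
          (Finset.mem_inter.mpr ⟨hmemCB _ hzb', h2⟩)
      · exact ⟨zb'.1, hBsub _ (hmemCB _ hzb') h2⟩
    · exact ⟨zb.1, hBsub _ (hmemCB _ hzb) h1⟩
  have hpureWne : pureW.Nonempty := by
    by_cases h1 : zw.1 ∈ CB
    · by_cases h2 : zw'.1 ∈ CB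
      · exfalso
        apply hzwne
        exact hmix2 zw.1 (Finset.mem_inter.mpr ⟨h1, hmemCW _ hzw⟩) zw'.1
          (Finset.mem_inter.mpr ⟨h2, hmemCW _ hzw'⟩)
      · exact ⟨zw'.1, hWsub _ (hmemCW _ hzw') h2⟩
    · exact ⟨zw.1, hWsub _ (hmemCW _ hzw) h1⟩
  have hpBpos : 1 ≤ pureB.card := Finset.card_pos.mpr hpureBne
  have hpWpos : 1 ≤ pureW.card := Finset.card_pos.mpr hpureWne
  by_cases hmixex : ∃ c, c ∈ CB ∩ CW
  · obtain ⟨c, hc⟩ := hmixex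
    have hcB : c ∈ CB := (Finset.mem_inter.mp hc).1
    have hcW : c ∈ CW := (Finset.mem_inter.mp hc).2
    have hcnotB : c ∉ pureB := by
      rw [hpB, Finset.mem_sdiff]; rintro ⟨-, h2⟩; exact h2 hcW
    have hcnotW : c ∉ pureW := by
      rw [hpW, Finset.mem_sdiff]; rintro ⟨-, h2⟩; exact h2 hcB
    have hcover : pureB ∪ pureW ∪ {c} = Finset.univ := by
      ext x
      simp only [Finset.mem_union, Finset.mem_singleton, Finset.mem_univ, iff_true]
      by_cases h1 : x ∈ CB
      · by_cases h2 : x ∈ CW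
        · right
          exact hmix2 x (Finset.mem_inter.mpr ⟨h1, h2⟩) c hc
        · exact Or.inl (Or.inl (hBsub x h1 h2))
      · exact Or.inl (Or.inr (hWsub x (hempty x h1) h1))
    have hcardcover : pureB.card + pureW.card + 1 = 2 ^ n := by
      have hd2 : Disjoint (pureB ∪ pureW) ({c} : Finset (Fin n → Bool)) := by
        rw [Finset.disjoint_singleton_right, Finset.mem_union]
        rintro (h | h)
        · exact hcnotB h
        · exact hcnotW h
      have := congrArg Finset.card hcover
      rw [Finset.card_union_of_disjoint hd2, Finset.card_union_of_disjoint hdisjBW,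
        Finset.card_singleton] at this
      simpa using this
    have hmixc := hmixed_bnd c hc
    have hsumge : (∑ y ∈ pureB, (cfib n S y).card) + (∑ z ∈ pureW, (cfib n S z).card)
        + (cfib n S c).card ≤ ∑ x : Fin n → Bool, (cfib n S x).card := by
      have hd2 : Disjoint (pureB ∪ pureW) ({c} : Finset (Fin n → Bool)) := by
        rw [Finset.disjoint_singleton_right, Finset.mem_union]
        rintro (h | h)
        · exact hcnotB h
        · exact hcnotW h
      calc (∑ y ∈ pureB, (cfib n S y).card) + (∑ z ∈ pureW, (cfib n S z).card)
          + (cfib n S c).card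
          = ∑ x ∈ pureB ∪ pureW ∪ {c}, (cfib n S x).card := by
            rw [Finset.sum_union hd2, Finset.sum_union hdisjBW, Finset.sum_singleton]
      _ ≤ _ := Finset.sum_le_sum_of_subset (Finset.subset_univ _)
    have hquad : 2 ^ n - 2 ≤ pureB.card * pureW.card := by
      have he : pureW.card = 2 ^ n - pureB.card - 1 := by omega
      rw [he]
      exact arith_quad hpBpos (by omega)
    have hn2 : 2 ≤ n := n_ge_two_of_pow (by omega)
    have harith := arith_half' (g := g) hn2 hg
    omega
  · -- no mixed cluster at all
    have hCBW : ∀ x, x ∉ CB ∨ x ∉ CW := by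
      intro x
      by_contra hcon
      push_neg at hcon
      exact hmixex ⟨x, Finset.mem_inter.mpr ⟨hcon.1, hcon.2⟩⟩
    have hcover : pureB ∪ pureW = Finset.univ := by
      ext x
      simp only [Finset.mem_union, Finset.mem_univ, iff_true]
      by_cases h1 : x ∈ CB
      · rcases hCBW x with h | h
        · exact absurd h1 h
        · exact Or.inl (hBsub x h1 h)
      · exact Or.inr (hWsub x (hempty x h1) h1)
    have hcardcover : pureB.card + pureW.card = 2 ^ n := by
      have := congrArg Finset.card hcover
      rw [Finset.card_union_of_disjoint hdisjBW] at this
      simpa using this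
    have hpB2 : 2 ≤ pureB.card := by
      have h1 : zb.1 ∈ pureB := by
        rcases hCBW zb.1 with h | h
        · exact absurd (hmemCB _ hzb) h
        · exact hBsub _ (hmemCB _ hzb) h
      have h2 : zb'.1 ∈ pureB := by
        rcases hCBW zb'.1 with h | h
        · exact absurd (hmemCB _ hzb') h
        · exact hBsub _ (hmemCB _ hzb') h
      exact Finset.one_lt_card.mpr ⟨zb.1, h1, zb'.1, h2, hzbne⟩
    have hpW2 : 2 ≤ pureW.card := by
      have h1 : zw.1 ∈ pureW := by
        rcases hCBW zw.1 with h | h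
        · exact hWsub _ (hmemCW _ hzw) h
        · exact absurd (hmemCW _ hzw) h
      have h2 : zw'.1 ∈ pureW := by
        rcases hCBW zw'.1 with h | h
        · exact hWsub _ (hmemCW _ hzw') h
        · exact absurd (hmemCW _ hzw') h
      exact Finset.one_lt_card.mpr ⟨zw.1, h1, zw'.1, h2, hzwne⟩
    have hsumge : (∑ y ∈ pureB, (cfib n S y).card) + (∑ z ∈ pureW, (cfib n S z).card)
        ≤ ∑ x : Fin n → Bool, (cfib n S x).card := by
      calc (∑ y ∈ pureB, (cfib n S y).card) + (∑ z ∈ pureW, (cfib n S z).card)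
          = ∑ x ∈ pureB ∪ pureW, (cfib n S x).card := (Finset.sum_union hdisjBW).symm
      _ ≤ _ := Finset.sum_le_sum_of_subset (Finset.subset_univ _)
    have hquad : 2 * (2 ^ n - 2) ≤ pureB.card * pureW.card := by
      have he : pureW.card = 2 ^ n - pureB.card := by omega
      rw [he]
      exact arith_quad2 hpB2 (by omega)
    omega

end LowerBoundMain

end RgHCN

/-- κ^g(HCN_n) = 2^g (n+1-g) for n ≥ 1 and 0 ≤ g ≤ n-1. -/
theorem stmt_11 (n g : ℕ) (hn : 1 ≤ n) (hg : g ≤ n - 1) :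
    (∃ S : Set (HVert n), IsRgCut n g S ∧ S.ncard = 2 ^ g * (n + 1 - g)) ∧
    (∀ S : Set (HVert n), IsRgCut n g S → 2 ^ g * (n + 1 - g) ≤ S.ncard) := by
  exact ⟨RgHCN.exists_rg_cut hn g hg, fun S hS => RgHCN.lower_bound hn hg S hS⟩
end
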